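/- arXiv:2404.14940 — 6 statements merged into one kernel-verified Lean document; each statement's English description precedes it below -/
import Mathlib

section
/- For every integer d ≥ 0 there exists a triangle-free graph G with a vertex v such that G − v is a forest (i.e., feedback vertex number 1), and G admits no 2-colouring in which every monochromatic component has maximum degree at most d. -/
open SimpleGraph Set

/-- The monochromatic subgraph of `G` under colouring `C`. -/
def monoSubgraph {V α : Type*} (G : SimpleGraph V) (C : V → α) : SimpleGraph V where
  Adj a b := G.Adj a b ∧ C a = C b
  symm := ⟨fun _ _ h => ⟨h.1.symm, h.2.symm⟩⟩
  loopless := ⟨fun a h => G.loopless.irrefl a h.1⟩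

/-- The colouring `C` of `G` has defect at most `d`: every monochromatic component has
maximum degree at most `d` (equivalently, every vertex has at most `d` neighbours of
its own colour). -/
def HasDefect {V α : Type*} (G : SimpleGraph V) (C : V → α) (d : ℕ) : Prop :=
  ∀ v, {w | G.Adj v w ∧ C w = C v}.ncard ≤ d

/-- The colouring `C` of `G` has clustering at most `c`: every monochromatic component
has at most `c` vertices. -/
def HasClustering {V α : Type*} (G : SimpleGraph V) (C : V → α) (c : ℕ) : Prop :=
  ∀ v, {w | (monoSubgraph G C).Reachable v w}.ncard ≤ c

/-- Feedback vertex number at most `k`. -/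
def FvnLE {V : Type*} (G : SimpleGraph V) (k : ℕ) : Prop :=
  ∃ A : Set V, A.Finite ∧ A.ncard ≤ k ∧ (G.induce Aᶜ).IsAcyclic

/-- `H` is a minor of `G`, via branch sets. -/
def IsMinorOf {W V : Type*} (H : SimpleGraph W) (G : SimpleGraph V) : Prop :=
  ∃ B : W → Set V,
    (∀ w, (B w).Nonempty) ∧
    (Pairwise fun w w' => Disjoint (B w) (B w')) ∧
    (∀ w, (G.induce (B w)).Connected) ∧
    (∀ w w', H.Adj w w' → ∃ a ∈ B w, ∃ b ∈ B w', G.Adj a b)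

/-- Treedepth at most `k`: there is a forest (ancestor) partial order `r` of height
at most `k` such that the endpoints of every edge are comparable. -/
def TreedepthLE {V : Type*} (G : SimpleGraph V) (k : ℕ) : Prop :=
  ∃ r : V → V → Prop,
    (∀ v, r v v) ∧
    (∀ a b c, r a b → r b c → r a c) ∧
    (∀ a b, r a b → r b a → a = b) ∧
    (∀ v a b, r a v → r b v → r a b ∨ r b a) ∧
    (∀ v, {u | r u v}.Finite ∧ {u | r u v}.ncard ≤ k) ∧
    (∀ a b, G.Adj a b → r a b ∨ r b a)

/-- Pathwidth at most `k`, via path decompositions. -/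
def PathwidthLE {V : Type*} (G : SimpleGraph V) (k : ℕ) : Prop :=
  ∃ (n : ℕ) (B : Fin n → Set V),
    (∀ v, ∃ i, v ∈ B i) ∧
    (∀ a b, G.Adj a b → ∃ i, a ∈ B i ∧ b ∈ B i) ∧
    (∀ i j l : Fin n, i ≤ j → j ≤ l → ∀ v, v ∈ B i → v ∈ B l → v ∈ B j) ∧
    (∀ i, (B i).ncard ≤ k + 1)

/-- `w` is 2-reachable from `v` with respect to the order `r`. -/
def TwoReach {V : Type*} (G : SimpleGraph V) (r : V → V → Prop) (v w : V) : Prop :=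
  w = v ∨ (r w v ∧ (G.Adj v w ∨ ∃ u, r v u ∧ u ≠ v ∧ G.Adj v u ∧ G.Adj u w))

/-- The 2-strong colouring number `col₂(G)`. -/
noncomputable def col2 {V : Type*} (G : SimpleGraph V) : ℕ :=
  sInf {m | ∃ r : V → V → Prop, IsLinearOrder V r ∧ ∀ v, {w | TwoReach G r v w}.ncard ≤ m}

/-- `G` contains a complete bipartite subgraph `K_{s,t}`. -/
def HasKstSubgraph {V : Type*} (G : SimpleGraph V) (s t : ℕ) : Prop :=
  ∃ (A B : Finset V), Disjoint A B ∧ A.card = s ∧ B.card = t ∧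
    ∀ a ∈ A, ∀ b ∈ B, G.Adj a b

/-- `x` is a prefix of `y`, as nodes of the complete `d`-ary tree of height `n`. -/
def SeqPrefix {n d : ℕ} (x y : Σ i : Fin n, Fin (i : ℕ) → Fin d) : Prop :=
  ∃ h : (x.1 : ℕ) ≤ (y.1 : ℕ), ∀ a : Fin (x.1 : ℕ), y.2 (Fin.castLE h a) = x.2 a

/-- The graph `H^(d)`, on the nodes of the complete `d`-ary tree of height `n`:
on each root–leaf path `(x_1, …, x_n)`, `x_i x_j` is an edge iff `v_i v_j ∈ E(H)`. -/
def HdGraph (n d : ℕ) (H : SimpleGraph (Fin n)) :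
    SimpleGraph (Σ i : Fin n, Fin (i : ℕ) → Fin d) where
  Adj x y := H.Adj x.1 y.1 ∧ (SeqPrefix x y ∨ SeqPrefix y x)
  symm := ⟨fun _ _ h => ⟨h.1.symm, h.2.symm⟩⟩
  loopless := ⟨fun x h => H.loopless.irrefl x.1 h.1⟩

/-- Planarity, via Wagner's characterisation: no `K₅` minor and no `K_{3,3}` minor. -/
def IsPlanarWagner {V : Type*} (G : SimpleGraph V) : Prop :=
  ¬ IsMinorOf (⊤ : SimpleGraph (Fin 5)) G ∧
  ¬ IsMinorOf (completeBipartiteGraph (Fin 3) (Fin 3)) G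

/-- The independence number. -/
noncomputable def indepNum {V : Type*} (H : SimpleGraph V) : ℕ :=
  sSup {m | ∃ s : Finset V, s.card = m ∧ ∀ a ∈ s, ∀ b ∈ s, a ≠ b → ¬ H.Adj a b}



-- Auxiliary material for stmt2

lemma support_tail_getElem? {V : Type*} {G : SimpleGraph V} {u v : V} (p : G.Walk u v) :
    ∀ i : ℕ, i < p.length → p.support.tail[i]? = some (p.getVert (i+1)) := by
  induction p with
  | nil => intro i hi; simp at hi
  | cons h q ih =>
    intro i hi
    rw [Walk.support_cons, List.tail_cons]
    cases i with
    | zero =>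
      rw [q.support_eq_cons]
      simp [Walk.getVert_cons_succ, Walk.getVert_zero]
    | succ i =>
      rw [q.support_eq_cons]
      simp only [List.getElem?_cons_succ, Walk.getVert_cons_succ]
      exact ih i (by simpa [Walk.length_cons] using Nat.lt_of_succ_lt_succ hi)

lemma acyclic_of_rank {V : Type*} {G : SimpleGraph V} (h : V → ℕ)
    (hne : ∀ ⦃a b⦄, G.Adj a b → h a ≠ h b)
    (huniq : ∀ ⦃b a a'⦄, G.Adj b a → G.Adj b a' → h a < h b → h a' < h b → a = a') :
    G.IsAcyclic := by
  classical
  intro u p hp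
  -- pick max rank vertex on support
  have hne' : p.support ≠ [] := p.support_ne_nil
  obtain ⟨m, hm, hmax⟩ : ∃ m ∈ p.support, ∀ z ∈ p.support, h z ≤ h m := by
    obtain ⟨m, hm, hmax⟩ := p.support.toFinset.exists_max_image h
      (by simpa using List.toFinset_nonempty_iff.mpr hne')
    exact ⟨m, List.mem_toFinset.mp hm, fun z hz => hmax z (List.mem_toFinset.mpr hz)⟩
  set c := p.rotate m hm with hcdef
  have hc : c.IsCycle := hp.rotate hm
  have hmemc : ∀ z ∈ c.support, z ∈ p.support := by
    intro z hz
    rw [c.support_eq_cons] at hz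
    rcases List.mem_cons.mp hz with hz' | hz'
    · exact hz' ▸ hm
    · have := (Walk.support_rotate p m hm).mem_iff.mp hz'
      rw [p.support_eq_cons]; exact List.mem_cons_of_mem _ this
  have hlen : 3 ≤ c.length := hc.three_le_length
  set n := c.length with hn
  have h1 : G.Adj m (c.getVert 1) := by
    have := c.adj_getVert_succ (i := 0) (by omega)
    simpa using this
  have h2 : G.Adj m (c.getVert (n-1)) := by
    have := c.adj_getVert_succ (i := n-1) (by omega)
    have heq : n - 1 + 1 = n := by omega
    rw [heq] at this
    have : G.Adj (c.getVert (n-1)) m := by simpa [hn, c.getVert_length] using this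
    exact this.symm
  have hz1 : c.getVert 1 ∈ c.support :=
    Walk.mem_support_iff_exists_getVert.mpr ⟨1, rfl, by omega⟩
  have hz2 : c.getVert (n-1) ∈ c.support :=
    Walk.mem_support_iff_exists_getVert.mpr ⟨n-1, rfl, by omega⟩
  have hl1 : h (c.getVert 1) < h m :=
    lt_of_le_of_ne (hmax _ (hmemc _ hz1)) (fun he => hne h1 he.symm)
  have hl2 : h (c.getVert (n-1)) < h m :=
    lt_of_le_of_ne (hmax _ (hmemc _ hz2)) (fun he => hne h2 he.symm)
  have heq := huniq h1 h2 hl1 hl2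
  -- but getVert 1 ≠ getVert (n-1) by nodup of support tail
  have hnodup : c.support.tail.Nodup := hc.support_nodup
  have e1 : c.support.tail[0]? = some (c.getVert 1) :=
    support_tail_getElem? c 0 (by omega)
  have e2 : c.support.tail[(n-2)]? = some (c.getVert (n-1)) := by
    have := support_tail_getElem? c (n-2) (by omega)
    rwa [show n - 2 + 1 = n - 1 by omega] at this
  have hlen' : c.support.tail.length = n := by
    have := c.length_support
    simp [List.length_tail, this, hn]
  have : (0 : ℕ) = n - 2 := by
    apply (List.getElem?_inj (i := 0) (by omega) hnodup).mp
    rw [e1, e2, heq]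
  omega

inductive Vtx (d : ℕ) : Type where
  | vv : Vtx d
  | rr : Vtx d
  | ww : Fin (2*d+1) → Vtx d
  | xx : Fin (2*d+1) → Vtx d
  | yy : Fin (2*d+1) → Fin (d+1) → Vtx d
  deriving DecidableEq, Fintype

def vRel (d : ℕ) : Vtx d → Vtx d → Prop
  | .vv, .ww _ => True
  | .vv, .yy _ _ => True
  | .rr, .ww _ => True
  | .rr, .xx _ => True
  | .xx i, .yy i' _ => i = i'
  | _, _ => False

def gph (d : ℕ) : SimpleGraph (Vtx d) := SimpleGraph.fromRel (vRel d)

def rk {d : ℕ} : Vtx d → ℕ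
  | .vv => 0
  | .rr => 0
  | .ww _ => 1
  | .xx _ => 1
  | .yy _ _ => 2

lemma gph_cliquefree (d : ℕ) : (gph d).CliqueFree 3 := by
  intro t ht
  rw [is3Clique_iff] at ht
  obtain ⟨a, b, c, hab, hac, hbc, -⟩ := ht
  rcases a with _|_|i|i|⟨i,j⟩ <;> rcases b with _|_|i'|i'|⟨i',j'⟩ <;>
    rcases c with _|_|i''|i''|⟨i'',j''⟩ <;>
    simp_all [gph, SimpleGraph.fromRel_adj, vRel]

lemma gph_induced_acyclic (d : ℕ) : ((gph d).induce {Vtx.vv}ᶜ).IsAcyclic := by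
  apply acyclic_of_rank (fun u => rk u.1)
  · rintro ⟨a, ha⟩ ⟨b, hb⟩ hab
    simp only [Set.mem_compl_iff, Set.mem_singleton_iff] at ha hb
    have : (gph d).Adj a b := hab
    rcases a with _|_|i|i|⟨i,j⟩ <;> rcases b with _|_|i'|i'|⟨i',j'⟩ <;>
      simp_all [gph, SimpleGraph.fromRel_adj, vRel, rk]
  · rintro ⟨b, hb⟩ ⟨a, ha⟩ ⟨a', ha'⟩ h1 h2 l1 l2
    simp only [Set.mem_compl_iff, Set.mem_singleton_iff] at ha ha' hb
    have h1' : (gph d).Adj b a := h1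
    have h2' : (gph d).Adj b a' := h2
    simp only at l1 l2
    apply Subtype.ext
    rcases b with _|_|i|i|⟨i,j⟩ <;> rcases a with _|_|i'|i'|⟨i',j'⟩ <;>
      rcases a' with _|_|i''|i''|⟨i'',j''⟩ <;>
      simp_all [gph, SimpleGraph.fromRel_adj, vRel, rk]

lemma fin2_eq (x y z : Fin 2) (hx : x ≠ z) (hy : y ≠ z) : x = y := by
  fin_cases x <;> fin_cases y <;> fin_cases z <;> simp_all

lemma gph_no_defect (d : ℕ) (C : Vtx d → Fin 2) : ¬ HasDefect (gph d) C d := by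
  classical
  intro hC
  set a := C Vtx.vv with ha
  have hadj_vw : ∀ j, (gph d).Adj .vv (.ww j) := by
    intro j; simp [gph, SimpleGraph.fromRel_adj, vRel]
  have hadj_vy : ∀ i j, (gph d).Adj .vv (.yy i j) := by
    intro i j; simp [gph, SimpleGraph.fromRel_adj, vRel]
  have hadj_rw : ∀ j, (gph d).Adj .rr (.ww j) := by
    intro j; simp [gph, SimpleGraph.fromRel_adj, vRel]
  have hadj_rx : ∀ i, (gph d).Adj .rr (.xx i) := by
    intro i; simp [gph, SimpleGraph.fromRel_adj, vRel]
  have hadj_xy : ∀ i j, (gph d).Adj (.xx i) (.yy i j) := by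
    intro i j; simp [gph, SimpleGraph.fromRel_adj, vRel]
  have hv := hC Vtx.vv
  have hr := hC Vtx.rr
  -- step 1 : at most d of the w's have colour a
  set A := {j : Fin (2*d+1) | C (Vtx.ww j) = a} with hA
  have hwinj : Function.Injective (Vtx.ww (d := d)) := by
    intro i i' h; simpa using h
  have hAcard : A.ncard ≤ d := by
    rw [← Set.ncard_image_of_injective A hwinj]
    refine le_trans (Set.ncard_le_ncard ?_ (Set.toFinite _)) hv
    rintro _ ⟨j, hj, rfl⟩
    exact ⟨hadj_vw j, hj⟩
  have hAc : d + 1 ≤ Aᶜ.ncard := by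
    have := Set.ncard_add_ncard_compl A
    rw [Nat.card_eq_fintype_card, Fintype.card_fin] at this
    omega
  -- step 2 : C rr = a
  have hCr : C Vtx.rr = a := by
    by_contra hra
    have hsub : (Vtx.ww '' Aᶜ) ⊆ {w | (gph d).Adj .rr w ∧ C w = C Vtx.rr} := by
      rintro _ ⟨j, hj, rfl⟩
      exact ⟨hadj_rw j, fin2_eq _ _ _ hj hra⟩
    have := le_trans (Set.ncard_le_ncard hsub (Set.toFinite _)) hr
    rw [Set.ncard_image_of_injective _ hwinj] at this
    omega
  -- step 3 : at most d indices i have some y i j coloured a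
  set B := {i : Fin (2*d+1) | ∃ j, C (Vtx.yy i j) = a} with hB
  set f : Fin (2*d+1) → Vtx d :=
    fun i => if h : ∃ j, C (Vtx.yy i j) = a then .yy i h.choose else .yy i 0 with hf
  have hfshape : ∀ i, ∃ j, f i = .yy i j := by
    intro i; rw [hf]; simp only []; split <;> exact ⟨_, rfl⟩
  have hfinj : Function.Injective f := by
    intro i i' h
    obtain ⟨j, hj⟩ := hfshape i
    obtain ⟨j', hj'⟩ := hfshape i'
    rw [hj, hj'] at h
    simpa using (Vtx.yy.injEq ..).mp h |>.1
  have hBcard : B.ncard ≤ d := by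
    rw [← Set.ncard_image_of_injective B hfinj]
    refine le_trans (Set.ncard_le_ncard ?_ (Set.toFinite _)) hv
    rintro _ ⟨i, hi, rfl⟩
    have : f i = .yy i hi.choose := by rw [hf]; exact dif_pos hi
    rw [this]
    exact ⟨hadj_vy i _, hi.choose_spec⟩
  -- step 4 : for i ∉ B, C (xx i) = a
  have hx : ∀ i, i ∉ B → C (Vtx.xx i) = a := by
    intro i hiB
    by_contra hxa
    have hxd := hC (Vtx.xx i)
    have hsub : ((fun j => Vtx.yy i j) '' Set.univ) ⊆
        {w | (gph d).Adj (.xx i) w ∧ C w = C (Vtx.xx i)} := by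
      rintro _ ⟨j, -, rfl⟩
      refine ⟨hadj_xy i j, fin2_eq _ _ _ ?_ hxa⟩
      exact fun hja => hiB ⟨j, hja⟩
    have hyinj : Function.Injective (fun j => Vtx.yy i j) := by
      intro j j' h; simpa using (Vtx.yy.injEq ..).mp h |>.2
    have := le_trans (Set.ncard_le_ncard hsub (Set.toFinite _)) hxd
    rw [Set.ncard_image_of_injective _ hyinj, Set.ncard_univ,
      Nat.card_eq_fintype_card, Fintype.card_fin] at this
    omega
  -- step 5 : contradiction at r
  have hxinj : Function.Injective (Vtx.xx (d := d)) := by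
    intro i i' h; simpa using h
  have hsub : (Vtx.xx '' Bᶜ) ⊆ {w | (gph d).Adj .rr w ∧ C w = C Vtx.rr} := by
    rintro _ ⟨i, hi, rfl⟩
    exact ⟨hadj_rx i, by rw [hx i hi, hCr]⟩
  have hBc : d + 1 ≤ Bᶜ.ncard := by
    have := Set.ncard_add_ncard_compl B
    rw [Nat.card_eq_fintype_card, Fintype.card_fin] at this
    omega
  have := le_trans (Set.ncard_le_ncard hsub (Set.toFinite _)) hr
  rw [Set.ncard_image_of_injective _ hxinj] at this
  omega

/-- for every `d ≥ 0` there is a triangle-free graph `G` with a vertex `v`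
such that `G - v` is a forest, admitting no 2-colouring with defect at most `d`. -/
theorem stmt2 (d : ℕ) :
    ∃ (V : Type) (_ : Fintype V) (G : SimpleGraph V) (v : V),
      G.CliqueFree 3 ∧ (G.induce {v}ᶜ).IsAcyclic ∧
      ∀ C : V → Fin 2, ¬ HasDefect G C d :=
  ⟨Vtx d, inferInstance, gph d, .vv, gph_cliquefree d, gph_induced_acyclic d,
    fun C => gph_no_defect d C⟩
end

section
/- For every integer c ≥ 1 there exists a graph G with girth exactly 6, feedback vertex number at most 7, and pathwidth at most 8, such that in every 2-colouring of G some monochromatic component has more than c vertices. -/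
open SimpleGraph Set

/-! ### Auxiliary construction for `stmt3` -/

namespace Stmt3Aux

abbrev G4 := {f : Fin 4 → Fin 7 // Function.Injective f}
instance : Fintype G4 := by unfold G4; infer_instance
abbrev Vtx (n : ℕ) := (Fin 7) ⊕ (G4 × Fin n)
def slot (i : ℕ) : Fin 4 := ⟨i % 4, by omega⟩

def gAdj (n : ℕ) : Vtx n → Vtx n → Prop
  | .inl _, .inl _ => False
  | .inl a, .inr (g, i) => g.1 (slot i) = a
  | .inr (g, i), .inl a => g.1 (slot i) = a
  | .inr (g, i), .inr (h, j) => g = h ∧ ((i : ℕ) + 1 = j ∨ (j : ℕ) + 1 = i)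

def gg (n : ℕ) : SimpleGraph (Vtx n) where
  Adj := gAdj n
  symm := by constructor; rintro (a | ⟨g, i⟩) (b | ⟨h, j⟩) hadj <;> simp_all [gAdj] <;> tauto
  loopless := by constructor; rintro (a | ⟨g, i⟩) hadj <;> simp_all [gAdj]

@[simp] lemma gAdj_ll {n a b} : (gg n).Adj (.inl a) (.inl b) ↔ False := Iff.rfl
@[simp] lemma gAdj_lr {n a g i} : (gg n).Adj (.inl a) (.inr (g, i)) ↔ g.1 (slot i) = a := Iff.rfl
@[simp] lemma gAdj_rl {n a g i} : (gg n).Adj (.inr (g, i)) (.inl a) ↔ g.1 (slot i) = a := Iff.rfl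
@[simp] lemma gAdj_rr {n g i h j} : (gg n).Adj (.inr (g, i)) (.inr (h, j)) ↔
    g = h ∧ ((i : ℕ) + 1 = j ∨ (j : ℕ) + 1 = i) := Iff.rfl

lemma slot_inj {g : G4} {i j : ℕ} (h : g.1 (slot i) = g.1 (slot j)) : i % 4 = j % 4 := by
  have := g.2 h
  simpa [slot, Fin.ext_iff] using this

lemma support_map_range {V} {G : SimpleGraph V} :
    ∀ {u v : V} (w : G.Walk u v), w.support = (List.range (w.length + 1)).map w.getVert
  | _, _, .nil => rfl
  | u, v, .cons h p => by
    rw [SimpleGraph.Walk.support_cons, support_map_range p]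
    simp [List.range_succ_eq_map, Function.comp]

lemma cycle_getVert_inj {V} {G : SimpleGraph V} {u : V} {w : G.Walk u u} (hw : w.IsCycle)
    {i j : ℕ} (hi : 1 ≤ i) (hij : i < j) (hj : j ≤ w.length)
    (h : w.getVert i = w.getVert j) : False := by
  have hnd := hw.support_nodup
  rw [support_map_range] at hnd
  have : (List.range (w.length + 1)).map w.getVert =
      w.getVert 0 :: (List.range w.length).map (fun k => w.getVert (k+1)) := by
    rw [List.range_succ_eq_map]; simp [Function.comp]
  rw [this] at hnd
  simp only [List.tail_cons] at hnd
  rw [List.nodup_iff_injective_get] at hnd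
  have h3 := hw.three_le_length
  have := hnd (a₁ := ⟨i - 1, by simp; omega⟩) (a₂ := ⟨j - 1, by simp; omega⟩) ?_
  · simp at this; omega
  · simp only [List.get_eq_getElem, List.getElem_map, List.getElem_range]
    show w.getVert (i - 1 + 1) = w.getVert (j - 1 + 1)
    rw [Nat.sub_add_cancel hi, Nat.sub_add_cancel (by omega)]
    exact h

lemma girth_lb {n : ℕ} {u : Vtx n} (w : (gg n).Walk u u) (hw : w.IsCycle) : 6 ≤ w.length := by
  by_contra hlen
  push_neg at hlen
  have h3 := hw.three_le_length
  -- adjacency facts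
  have hadj : ∀ i, i < w.length → (gg n).Adj (w.getVert i) (w.getVert (i+1)) :=
    fun i hi => w.adj_getVert_succ hi
  have hinj : ∀ i j, 1 ≤ i → i < j → j ≤ w.length → w.getVert i ≠ w.getVert j :=
    fun i j h1 h2 h3' h => cycle_getVert_inj hw h1 h2 h3' h
  have hlast : w.getVert w.length = w.getVert 0 := by rw [w.getVert_length, w.getVert_zero]
  interval_cases hl : w.length
  · -- length 3
    have a01 := hadj 0 (by omega); have a12 := hadj 1 (by omega); have a23 := hadj 2 (by omega)
    simp only [Nat.reduceAdd] at a01 a12 a23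
    rw [hlast] at a23
    have d12 := hinj 1 2 (by omega) (by omega) (by omega)
    have d13 := hinj 1 3 (by omega) (by omega) (by omega)
    have d23 := hinj 2 3 (by omega) (by omega) (by omega)
    rw [hlast] at d13 d23
    clear hadj hinj hlast h3 hlen hw

    generalize e0 : w.getVert 0 = x0 at a01 a23 d13 d23
    generalize e1 : w.getVert 1 = x1 at a01 a12 d12 d13
    generalize e2 : w.getVert 2 = x2 at a12 a23 d12 d23
    clear e0 e1 e2 hl w
    rcases x0 with a0 | ⟨g0, i0⟩ <;> rcases x1 with a1 | ⟨g1, i1⟩ <;>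
      rcases x2 with a2 | ⟨g2, i2⟩ <;>
      simp only [gAdj_ll, gAdj_lr, gAdj_rl, gAdj_rr] at a01 a12 a23
    · obtain ⟨rfl, s⟩ := a12
      have := slot_inj (a01.trans a23.symm)
      omega
    · obtain ⟨rfl, s⟩ := a23
      have := slot_inj (a12.trans a01.symm)
      omega
    · obtain ⟨rfl, s⟩ := a01
      have := slot_inj (a12.trans a23.symm)
      omega
    · obtain ⟨rfl, s1⟩ := a01
      obtain ⟨rfl, s2⟩ := a12
      obtain ⟨-, s3⟩ := a23
      omega
  · -- length 4
    have a01 := hadj 0 (by omega); have a12 := hadj 1 (by omega)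
    have a23 := hadj 2 (by omega); have a34 := hadj 3 (by omega)
    simp only [Nat.reduceAdd] at a01 a12 a23 a34
    rw [hlast] at a34
    have d12 := hinj 1 2 (by omega) (by omega) (by omega)
    have d13 := hinj 1 3 (by omega) (by omega) (by omega)
    have d14 := hinj 1 4 (by omega) (by omega) (by omega)
    have d23 := hinj 2 3 (by omega) (by omega) (by omega)
    have d24 := hinj 2 4 (by omega) (by omega) (by omega)
    have d34 := hinj 3 4 (by omega) (by omega) (by omega)
    rw [hlast] at d14 d24 d34
    clear hadj hinj hlast h3 hlen hw
    generalize e0 : w.getVert 0 = x0 at a01 a34 d14 d24 d34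
    generalize e1 : w.getVert 1 = x1 at a01 a12 d12 d13 d14
    generalize e2 : w.getVert 2 = x2 at a12 a23 d12 d23 d24
    generalize e3 : w.getVert 3 = x3 at a23 a34 d13 d23 d34
    clear e0 e1 e2 e3 hl w
    rcases x0 with a0 | ⟨g0, i0⟩ <;> rcases x1 with a1 | ⟨g1, i1⟩ <;>
      rcases x2 with a2 | ⟨g2, i2⟩ <;> rcases x3 with a3 | ⟨g3, i3⟩ <;>
      simp only [gAdj_ll, gAdj_lr, gAdj_rl, gAdj_rr] at a01 a12 a23 a34
    · -- LRLR
      exact d24 (congrArg Sum.inl (a12.symm.trans a01))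
    · -- LRRR
      obtain ⟨rfl, s2⟩ := a12
      obtain ⟨rfl, s3⟩ := a23
      have hm := slot_inj (a01.trans a34.symm)
      simp only [ne_eq, Sum.inr.injEq, Prod.mk.injEq, Fin.ext_iff, not_and] at d13
      have := d13 trivial
      omega
    · -- RLRL
      exact d13 (congrArg Sum.inl (a01.symm.trans a34))
    · -- RLRR
      obtain ⟨rfl, s3⟩ := a23
      obtain ⟨e, s4⟩ := a34
      subst e
      have hm := slot_inj (a01.trans a12.symm)
      simp only [ne_eq, Sum.inr.injEq, Prod.mk.injEq, Fin.ext_iff, not_and] at d24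
      have := d24 trivial
      omega
    · -- RRLR
      obtain ⟨rfl, s1⟩ := a01
      obtain ⟨e, s4⟩ := a34
      subst e
      have hm := slot_inj (a12.trans a23.symm)
      simp only [ne_eq, Sum.inr.injEq, Prod.mk.injEq, Fin.ext_iff, not_and] at d13
      have := d13 trivial
      omega
    · -- RRRL
      obtain ⟨rfl, s1⟩ := a01
      obtain ⟨rfl, s2⟩ := a12
      have hm := slot_inj (a23.trans a34.symm)
      simp only [ne_eq, Sum.inr.injEq, Prod.mk.injEq, Fin.ext_iff, not_and] at d24
      have := d24 trivial
      omega
    · -- RRRR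
      obtain ⟨rfl, s1⟩ := a01
      obtain ⟨rfl, s2⟩ := a12
      obtain ⟨rfl, s3⟩ := a23
      obtain ⟨-, s4⟩ := a34
      simp only [ne_eq, Sum.inr.injEq, Prod.mk.injEq, Fin.ext_iff, not_and] at d13 d24
      have h1 := d13 trivial
      have h2 := d24 trivial
      omega
  · -- length 5
    have a01 := hadj 0 (by omega); have a12 := hadj 1 (by omega)
    have a23 := hadj 2 (by omega); have a34 := hadj 3 (by omega)
    have a45 := hadj 4 (by omega)
    simp only [Nat.reduceAdd] at a01 a12 a23 a34 a45
    rw [hlast] at a45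
    have d13 := hinj 1 3 (by omega) (by omega) (by omega)
    have d14 := hinj 1 4 (by omega) (by omega) (by omega)
    have d15 := hinj 1 5 (by omega) (by omega) (by omega)
    have d24 := hinj 2 4 (by omega) (by omega) (by omega)
    have d25 := hinj 2 5 (by omega) (by omega) (by omega)
    have d35 := hinj 3 5 (by omega) (by omega) (by omega)
    rw [hlast] at d15 d25 d35
    clear hadj hinj hlast h3 hlen hw
    generalize e0 : w.getVert 0 = x0 at a01 a45 d15 d25 d35
    generalize e1 : w.getVert 1 = x1 at a01 a12 d13 d14 d15
    generalize e2 : w.getVert 2 = x2 at a12 a23 d24 d25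
    generalize e3 : w.getVert 3 = x3 at a23 a34 d13 d35
    generalize e4 : w.getVert 4 = x4 at a34 a45 d14 d24
    clear e0 e1 e2 e3 e4 hl w
    rcases x0 with a0 | ⟨g0, i0⟩ <;> rcases x1 with a1 | ⟨g1, i1⟩ <;>
      rcases x2 with a2 | ⟨g2, i2⟩ <;> rcases x3 with a3 | ⟨g3, i3⟩ <;>
      rcases x4 with a4 | ⟨g4, i4⟩ <;>
      simp only [gAdj_ll, gAdj_lr, gAdj_rl, gAdj_rr] at a01 a12 a23 a34 a45
    · -- LRLRR
      exact d25 (congrArg Sum.inl (a12.symm.trans a01))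
    · -- LRRLR
      exact d35 (congrArg Sum.inl (a34.symm.trans a45))
    · -- LRRRR
      obtain ⟨rfl, s2⟩ := a12
      obtain ⟨rfl, s3⟩ := a23
      obtain ⟨rfl, s4⟩ := a34
      have hm := slot_inj (a01.trans a45.symm)
      simp only [ne_eq, Sum.inr.injEq, Prod.mk.injEq, Fin.ext_iff, not_and] at d14
      have := d14 trivial
      omega
    · -- RLRLR
      exact d13 (congrArg Sum.inl (a12.symm.trans a23))
    · -- RLRRL
      exact d14 (congrArg Sum.inl (a01.symm.trans a45))
    · -- RLRRR
      obtain ⟨rfl, s3⟩ := a23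
      obtain ⟨rfl, s4⟩ := a34
      obtain ⟨e, s5⟩ := a45
      subst e
      have hm := slot_inj (a01.trans a12.symm)
      simp only [ne_eq, Sum.inr.injEq, Prod.mk.injEq, Fin.ext_iff, not_and] at d25
      have := d25 trivial
      omega
    · -- RRLRL
      exact d24 (congrArg Sum.inl (a23.symm.trans a34))
    · -- RRLRR
      obtain ⟨rfl, s1⟩ := a01
      obtain ⟨rfl, s4⟩ := a34
      obtain ⟨e, s5⟩ := a45
      subst e
      have hm := slot_inj (a12.trans a23.symm)
      simp only [ne_eq, Sum.inr.injEq, Prod.mk.injEq, Fin.ext_iff, not_and] at d13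
      have := d13 trivial
      omega
    · -- RRRLR
      obtain ⟨rfl, s1⟩ := a01
      obtain ⟨rfl, s2⟩ := a12
      obtain ⟨e, s5⟩ := a45
      subst e
      have hm := slot_inj (a23.trans a34.symm)
      simp only [ne_eq, Sum.inr.injEq, Prod.mk.injEq, Fin.ext_iff, not_and] at d24
      have := d24 trivial
      omega
    · -- RRRRL
      obtain ⟨rfl, s1⟩ := a01
      obtain ⟨rfl, s2⟩ := a12
      obtain ⟨rfl, s3⟩ := a23
      have hm := slot_inj (a34.trans a45.symm)
      simp only [ne_eq, Sum.inr.injEq, Prod.mk.injEq, Fin.ext_iff, not_and] at d35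
      have := d35 trivial
      omega
    · -- RRRRR
      obtain ⟨rfl, s1⟩ := a01
      obtain ⟨rfl, s2⟩ := a12
      obtain ⟨rfl, s3⟩ := a23
      obtain ⟨rfl, s4⟩ := a34
      obtain ⟨-, s5⟩ := a45
      omega

def g0 : G4 := ⟨fun i => ⟨i.1, by omega⟩, fun a b h => by
  simpa [Fin.ext_iff] using h⟩

def sixCycle (n : ℕ) (hn : 5 ≤ n) : (gg n).Walk (.inl (g0.1 ⟨0, by omega⟩)) (.inl (g0.1 ⟨0, by omega⟩)) :=
  .cons (by simp [slot, g0, Fin.ext_iff]) <|  -- inl → p0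
  .cons (u := .inr (g0, ⟨0, by omega⟩)) (v := .inr (g0, ⟨1, by omega⟩)) (by simp) <|
  .cons (v := .inr (g0, ⟨2, by omega⟩)) (by simp) <|
  .cons (v := .inr (g0, ⟨3, by omega⟩)) (by simp) <|
  .cons (v := .inr (g0, ⟨4, by omega⟩)) (by simp) <|
  .cons (by simp [slot, g0, Fin.ext_iff]) .nil

lemma sixCycle_isCycle (n : ℕ) (hn : 5 ≤ n) : (sixCycle n hn).IsCycle := by
  rw [Walk.isCycle_def]
  have e1 : (sixCycle n hn).edges = [s(Sum.inl (g0.1 ⟨0, by omega⟩), Sum.inr (g0, ⟨0, by omega⟩)),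
      s(Sum.inr (g0, ⟨0, by omega⟩), Sum.inr (g0, ⟨1, by omega⟩)),
      s(Sum.inr (g0, ⟨1, by omega⟩), Sum.inr (g0, ⟨2, by omega⟩)),
      s(Sum.inr (g0, ⟨2, by omega⟩), Sum.inr (g0, ⟨3, by omega⟩)),
      s(Sum.inr (g0, ⟨3, by omega⟩), Sum.inr (g0, ⟨4, by omega⟩)),
      s(Sum.inr (g0, ⟨4, by omega⟩), Sum.inl (g0.1 ⟨0, by omega⟩))] := rfl
  have e2 : (sixCycle n hn).support.tail = [Sum.inr (g0, ⟨0, by omega⟩), Sum.inr (g0, ⟨1, by omega⟩),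
      Sum.inr (g0, ⟨2, by omega⟩), Sum.inr (g0, ⟨3, by omega⟩), Sum.inr (g0, ⟨4, by omega⟩),
      Sum.inl (g0.1 ⟨0, by omega⟩)] := rfl
  refine ⟨⟨?_⟩, (by unfold sixCycle; intro h; cases h), ?_⟩
  · rw [e1]; simp [g0, Fin.ext_iff, Sym2.eq, Sym2.rel_iff]
  · rw [e2]; simp [g0, Fin.ext_iff]

lemma sixCycle_length (n : ℕ) (hn : 5 ≤ n) : (sixCycle n hn).length = 6 := by
  rfl

def pidx {n : ℕ} (x : {v : Vtx n // v ∈ (Set.range Sum.inl)ᶜ}) : ℕ :=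
  match x.1 with
  | .inl _ => 0
  | .inr (_, i) => (i : ℕ)

lemma induced_acyclic (n : ℕ) : ((gg n).induce (Set.range Sum.inl)ᶜ).IsAcyclic := by
  intro v w hw
  obtain ⟨b, hbF, hbmax⟩ := Finset.exists_max_image w.support.toFinset pidx
    ⟨v, by simp [Walk.start_mem_support]⟩
  have hb : b ∈ w.support := by simpa using hbF
  set w' := w.rotate _ hb with hw'
  have hc : w'.IsCycle := hw.rotate hb
  have hmem : ∀ x, x ∈ w'.support → x ∈ w.support := by
    intro x hx
    rw [Walk.support_eq_cons] at hx
    rcases List.mem_cons.1 hx with rfl | hx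
    · exact hb
    · exact List.mem_of_mem_tail ((Walk.support_rotate w _ hb).mem_iff.1 hx)
  have hsupp : ∀ x, x ∈ w'.support → pidx x ≤ pidx b := fun x hx =>
    hbmax x (by simpa using hmem x hx)
  have hlen : 3 ≤ w'.length := hc.three_le_length
  have h01 : ((gg n).induce (Set.range Sum.inl)ᶜ).Adj b (w'.getVert 1) := by
    have := w'.adj_getVert_succ (i := 0) (by omega)
    simpa [w'.getVert_zero] using this
  have hl0 : ((gg n).induce (Set.range Sum.inl)ᶜ).Adj (w'.getVert (w'.length - 1)) b := by
    have := w'.adj_getVert_succ (i := w'.length - 1) (by omega)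
    rwa [show w'.length - 1 + 1 = w'.length by omega, w'.getVert_length] at this
  have hne : w'.getVert 1 ≠ w'.getVert (w'.length - 1) := by
    intro h
    exact cycle_getVert_inj hc (i := 1) (j := w'.length - 1) (by omega) (by omega) (by omega) h
  have hm1 : w'.getVert 1 ∈ w'.support := by
    rw [Walk.mem_support_iff_exists_getVert]; exact ⟨1, rfl, by omega⟩
  have hm2 : w'.getVert (w'.length - 1) ∈ w'.support := by
    rw [Walk.mem_support_iff_exists_getVert]; exact ⟨w'.length - 1, rfl, by omega⟩
  have hp1 := hsupp _ hm1
  have hp2 := hsupp _ hm2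
  generalize hy1 : w'.getVert 1 = y1 at h01 hne hp1
  generalize hy2 : w'.getVert (w'.length - 1) = y2 at hl0 hne hp2
  clear_value w'
  clear hm1 hm2 hy1 hy2 hsupp hmem hbmax hbF hw' hlen hc hw w' hb w
  obtain ⟨bv, hbv⟩ := b
  obtain ⟨x1, hx1⟩ := y1
  obtain ⟨x2, hx2⟩ := y2
  rcases bv with a | ⟨gb, ib⟩
  · exact hbv (Set.mem_range_self a)
  rcases x1 with a | ⟨g1, i1⟩
  · exact hx1 (Set.mem_range_self a)
  rcases x2 with a | ⟨g2, i2⟩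
  · exact hx2 (Set.mem_range_self a)
  rw [comap_adj] at h01 hl0
  simp only [Function.Embedding.coe_subtype] at h01 hl0
  rw [gAdj_rr] at hl0
  have h01' := (gg n).adj_symm h01
  rw [gAdj_rr] at h01'
  simp only [pidx] at hp1 hp2
  apply hne
  apply Subtype.ext
  simp only [Sum.inr.injEq, Prod.mk.injEq]
  exact ⟨h01'.1.trans hl0.1.symm, Fin.ext (by have := h01'.2; have := hl0.2; omega)⟩

lemma base_unique {a b i j n : ℕ} (hi : i < n) (hj : j < n) (h : a * n + i = b * n + j) :
    a = b ∧ i = j := by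
  have hn : 0 < n := by omega
  have h1 : (a * n + i) / n = a := by
    rw [mul_comm, Nat.mul_add_div hn, Nat.div_eq_of_lt hi, Nat.add_zero]
  have h2 : (b * n + j) / n = b := by
    rw [mul_comm, Nat.mul_add_div hn, Nat.div_eq_of_lt hj, Nat.add_zero]
  have hab : a = b := by rw [← h1, ← h2, h]
  subst hab
  exact ⟨rfl, by omega⟩

variable {n : ℕ}

noncomputable def genum : G4 ≃ Fin (Fintype.card G4) := Fintype.equivFin G4

def decodeSet (n k : ℕ) : Set (Vtx n) :=
  {v | ∃ (g : G4) (i : Fin n), v = Sum.inr (g, i) ∧ (genum g : ℕ) * n + (i : ℕ) = k}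

lemma decodeSet_subsingleton (n k : ℕ) : (decodeSet n k).Subsingleton := by
  rintro x ⟨g, i, rfl, hx⟩ y ⟨g', i', rfl, hy⟩
  obtain ⟨h1, h2⟩ := base_unique i.2 i'.2 (hx.trans hy.symm)
  have : g = g' := genum.injective (Fin.ext h1)
  subst this
  simp [Fin.ext_iff, h2]

lemma cardG4_pos : 0 < Fintype.card G4 := Fintype.card_pos_iff.mpr ⟨g0⟩

lemma subsingleton_ncard_le_one {α : Type*} {s : Set α} (h : s.Subsingleton) : s.ncard ≤ 1 := by
  rcases Set.encard_le_one_iff_eq.1 (Set.encard_le_one_iff.2 fun a b ha hb => h ha hb) with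
    rfl | ⟨x, rfl⟩
  · simp
  · simp

lemma pw (hn : 1 ≤ n) : PathwidthLE (gg n) 8 := by
  refine ⟨Fintype.card G4 * n,
    fun k => Set.range Sum.inl ∪ decodeSet n k ∪ decodeSet n ((k : ℕ) + 1), ?_, ?_, ?_, ?_⟩
  · rintro (a | ⟨g, i⟩)
    · refine ⟨⟨0, ?_⟩, Or.inl (Or.inl (Set.mem_range_self a))⟩
      calc 0 < n := hn
        _ ≤ Fintype.card G4 * n := Nat.le_mul_of_pos_left n cardG4_pos
    · refine ⟨⟨(genum g : ℕ) * n + (i : ℕ), ?_⟩, Or.inl (Or.inr ⟨g, i, rfl, rfl⟩)⟩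
      have h1 : (genum g : ℕ) < Fintype.card G4 := (genum g).2
      have h2 : (i : ℕ) < n := i.2
      calc (genum g : ℕ) * n + (i : ℕ) < (genum g : ℕ) * n + n := by omega
        _ = ((genum g : ℕ) + 1) * n := by ring
        _ ≤ Fintype.card G4 * n := Nat.mul_le_mul_right n (by omega)
  · rintro (a | ⟨g, i⟩) (b | ⟨h, j⟩) hadj
    · exact absurd hadj (by simp [gg, gAdj])
    · -- apex -- path vertex
      refine ⟨⟨(genum h : ℕ) * n + (j : ℕ), ?_⟩, Or.inl (Or.inl (Set.mem_range_self a)),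
        Or.inl (Or.inr ⟨h, j, rfl, rfl⟩)⟩
      have h1 : (genum h : ℕ) < Fintype.card G4 := (genum h).2
      have h2 : (j : ℕ) < n := j.2
      calc (genum h : ℕ) * n + (j : ℕ) < (genum h : ℕ) * n + n := by omega
        _ = ((genum h : ℕ) + 1) * n := by ring
        _ ≤ Fintype.card G4 * n := Nat.mul_le_mul_right n (by omega)
    · refine ⟨⟨(genum g : ℕ) * n + (i : ℕ), ?_⟩, Or.inl (Or.inr ⟨g, i, rfl, rfl⟩),
        Or.inl (Or.inl (Set.mem_range_self b))⟩
      have h1 : (genum g : ℕ) < Fintype.card G4 := (genum g).2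
      have h2 : (i : ℕ) < n := i.2
      calc (genum g : ℕ) * n + (i : ℕ) < (genum g : ℕ) * n + n := by omega
        _ = ((genum g : ℕ) + 1) * n := by ring
        _ ≤ Fintype.card G4 * n := Nat.mul_le_mul_right n (by omega)
    · -- path -- path
      obtain ⟨rfl, hstep⟩ : g = h ∧ ((i : ℕ) + 1 = (j : ℕ) ∨ (j : ℕ) + 1 = (i : ℕ)) := hadj
      rcases hstep with hs | hs
      · refine ⟨⟨(genum g : ℕ) * n + (i : ℕ), ?_⟩, Or.inl (Or.inr ⟨g, i, rfl, rfl⟩),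
          Or.inr ⟨g, j, rfl, by simp only [Fin.val_mk]; omega⟩⟩
        have h1 : (genum g : ℕ) < Fintype.card G4 := (genum g).2
        have h2 : (i : ℕ) < n := i.2
        calc (genum g : ℕ) * n + (i : ℕ) < (genum g : ℕ) * n + n := by omega
          _ = ((genum g : ℕ) + 1) * n := by ring
          _ ≤ Fintype.card G4 * n := Nat.mul_le_mul_right n (by omega)
      · refine ⟨⟨(genum g : ℕ) * n + (j : ℕ), ?_⟩, Or.inr ⟨g, i, rfl, by simp only [Fin.val_mk]; omega⟩,
          Or.inl (Or.inr ⟨g, j, rfl, rfl⟩)⟩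
        have h1 : (genum g : ℕ) < Fintype.card G4 := (genum g).2
        have h2 : (j : ℕ) < n := j.2
        calc (genum g : ℕ) * n + (j : ℕ) < (genum g : ℕ) * n + n := by omega
          _ = ((genum g : ℕ) + 1) * n := by ring
          _ ≤ Fintype.card G4 * n := Nat.mul_le_mul_right n (by omega)
  · -- convexity
    rintro k1 k2 k3 h12 h23 (a | ⟨g, i⟩) hm1 hm3
    · exact Or.inl (Or.inl (Set.mem_range_self a))
    · have extract : ∀ (k : Fin (Fintype.card G4 * n)),
        Sum.inr (g, i) ∈ (Set.range Sum.inl ∪ decodeSet n k ∪ decodeSet n ((k : ℕ) + 1)) →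
          (genum g : ℕ) * n + (i : ℕ) = (k : ℕ) ∨
          (genum g : ℕ) * n + (i : ℕ) = (k : ℕ) + 1 := by
        rintro k (h | h)
        · rcases h with h | h
          · simp at h
          · obtain ⟨g', i', he, hk⟩ := h
            obtain ⟨rfl, rfl⟩ : g' = g ∧ i' = i := by
              simpa [eq_comm, Fin.ext_iff, Prod.ext_iff] using he
            exact Or.inl hk
        · obtain ⟨g', i', he, hk⟩ := h
          obtain ⟨rfl, rfl⟩ : g' = g ∧ i' = i := by
            simpa [eq_comm, Fin.ext_iff, Prod.ext_iff] using he
          exact Or.inr hk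
      have e1 := extract k1 hm1
      have e3 := extract k3 hm3
      have hk12 : (k1 : ℕ) ≤ (k2 : ℕ) := h12
      have hk23 : (k2 : ℕ) ≤ (k3 : ℕ) := h23
      set t := (genum g : ℕ) * n + (i : ℕ) with ht
      have : t = (k2 : ℕ) ∨ t = (k2 : ℕ) + 1 := by omega
      rcases this with h | h
      · exact Or.inl (Or.inr ⟨g, i, rfl, h.symm ▸ rfl⟩)
      · exact Or.inr ⟨g, i, rfl, by omega⟩
  · intro k
    apply le_trans (Set.ncard_union_le _ _)
    have h1 : (Set.range Sum.inl ∪ decodeSet n (k : ℕ)).ncard ≤ 8 := by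
      apply le_trans (Set.ncard_union_le _ _)
      have : (Set.range (Sum.inl : Fin 7 → Vtx n)).ncard = 7 := by
        rw [← Set.image_univ, Set.ncard_image_of_injective _ Sum.inl_injective, Set.ncard_univ]
        simp
      have h2 := subsingleton_ncard_le_one (decodeSet_subsingleton n (k : ℕ))
      omega
    have h2 := subsingleton_ncard_le_one (decodeSet_subsingleton n ((k : ℕ) + 1))
    omega

lemma fin2_eq : ∀ {x y k : Fin 2}, x ≠ k → y ≠ k → x = y := by decide

/-- path vertex -/
def pv {n : ℕ} (hn : 0 < n) (g : G4) (m : ℕ) : Vtx n :=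
  Sum.inr (g, ⟨m % n, Nat.mod_lt m hn⟩)

lemma pv_inj {n : ℕ} (hn : 0 < n) (g : G4) {m m' : ℕ} (hm : m < n) (hm' : m' < n)
    (h : pv hn g m = pv hn g m') : m = m' := by
  simp only [pv, Sum.inr.injEq, Prod.mk.injEq, Fin.ext_iff, true_and] at h
  rwa [Nat.mod_eq_of_lt hm, Nat.mod_eq_of_lt hm'] at h

lemma forcing (c : ℕ) (hc : 1 ≤ c) (n : ℕ) (hn : n = (4*c+5)*(c+1)) (C : Vtx n → Fin 2) :
    ¬ HasClustering (gg n) C c := by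
  intro hcl
  have hn0 : 0 < n := by subst hn; positivity
  -- Step 1: four apexes of the same colour
  obtain ⟨k, t, ht4, htk⟩ : ∃ (k : Fin 2) (t : Finset (Fin 7)), t.card = 4 ∧
      ∀ a ∈ t, C (Sum.inl a) = k := by
    set D : Fin 7 → Fin 2 := fun a => C (Sum.inl a) with hD
    have hsplit := Finset.card_filter_add_card_filter_not
      (s := (Finset.univ : Finset (Fin 7))) (p := fun a => D a = 0)
    simp only [Finset.card_univ, Fintype.card_fin] at hsplit
    rcases le_or_gt 4 ((Finset.univ.filter (fun a => D a = 0)).card) with h | h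
    · obtain ⟨t, hts, htc⟩ := Finset.exists_subset_card_eq h
      exact ⟨0, t, htc, fun a ha => (Finset.mem_filter.1 (hts ha)).2⟩
    · have h4 : 4 ≤ (Finset.univ.filter (fun a => ¬ D a = 0)).card := by omega
      obtain ⟨t, hts, htc⟩ := Finset.exists_subset_card_eq h4
      refine ⟨1, t, htc, fun a ha => ?_⟩
      have := (Finset.mem_filter.1 (hts ha)).2
      have h2 := (D a).2
      simp only [hD] at this ⊢
      omega
  -- the gadget
  have htc4 : t.card = 4 := ht4
  let f : Fin 4 → Fin 7 := fun i => (t.orderIsoOfFin htc4 i : Fin 7)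
  have hfinj : Function.Injective f := fun a b h =>
    (t.orderIsoOfFin htc4).injective (Subtype.ext h)
  have hfk : ∀ i, C (Sum.inl (f i)) = k := fun i => htk _ (t.orderIsoOfFin htc4 i).2
  set g : G4 := ⟨f, hfinj⟩ with hg
  by_cases hblue : ∃ j, j < 4*c+5 ∧ ∀ t', t' ≤ c → C (pv hn0 g (j*(c+1)+t')) ≠ k
  · -- a long run of the other colour
    obtain ⟨j, hj, hrun⟩ := hblue
    have hbound : ∀ t', t' ≤ c → j*(c+1)+t' < n := by
      intro t' ht'
      have : j*(c+1) + t' < (j+1)*(c+1) := by ring_nf; omega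
      have h2 : (j+1)*(c+1) ≤ (4*c+5)*(c+1) := Nat.mul_le_mul_right _ (by omega)
      omega
    have hreach : ∀ t', t' ≤ c →
        (monoSubgraph (gg n) C).Reachable (pv hn0 g (j*(c+1))) (pv hn0 g (j*(c+1)+t')) := by
      intro t' ht'
      induction t' with
      | zero => exact Reachable.refl _
      | succ s ih =>
        refine (ih (by omega)).trans (Adj.reachable ?_)
        refine And.intro ?_ ?_
        · simp only [pv, gAdj_rr, Fin.val_mk]
          refine ⟨trivial, Or.inl ?_⟩
          rw [Nat.mod_eq_of_lt (hbound s (by omega)), Nat.mod_eq_of_lt (hbound (s+1) ht')]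
          omega
        · exact fin2_eq (hrun s (by omega)) (hrun (s+1) ht')
    have hsub : ↑((Finset.range (c+1)).image (fun t' => pv hn0 g (j*(c+1)+t'))) ⊆
        {w | (monoSubgraph (gg n) C).Reachable (pv hn0 g (j*(c+1))) w} := by
      intro x hx
      simp only [Finset.coe_image, Set.mem_image, Finset.mem_coe, Finset.mem_range] at hx
      obtain ⟨t', ht', rfl⟩ := hx
      exact hreach t' (by omega)
    have hcard : ((Finset.range (c+1)).image (fun t' => pv hn0 g (j*(c+1)+t'))).card = c+1 := by
      rw [Finset.card_image_of_injOn, Finset.card_range]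
      intro a ha b hb h
      simp only [Finset.mem_coe, Finset.mem_range] at ha hb
      have := pv_inj hn0 g (hbound a (by omega)) (hbound b (by omega)) h
      omega
    have := hcl (pv hn0 g (j*(c+1)))
    have hge := Set.ncard_le_ncard hsub (Set.toFinite _)
    rw [Set.ncard_coe_finset, hcard] at hge
    omega
  · -- every window has a vertex of colour k
    push_neg at hblue
    choose tj htj hCtj using hblue
    set r : ℕ → ℕ := fun j => if h : j < 4*c+5 then j*(c+1) + tj j h else 0 with hr
    have hrlt : ∀ j (h : j < 4*c+5), r j < n := by
      intro j h
      have h1 := htj j h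
      have : j*(c+1) + tj j h < (j+1)*(c+1) := by ring_nf; omega
      have h2 : (j+1)*(c+1) ≤ (4*c+5)*(c+1) := Nat.mul_le_mul_right _ (by omega)
      simp only [hr, dif_pos h]
      omega
    -- pigeonhole on slots
    obtain ⟨y, -, hy⟩ := Finset.exists_lt_card_fiber_of_mul_lt_card_of_maps_to
      (s := Finset.range (4*c+5)) (t := (Finset.univ : Finset (Fin 4)))
      (f := fun j => slot (r j)) (fun a _ => Finset.mem_univ _)
      (n := c+1) (by simp [Finset.card_range]; omega)
    set fib := (Finset.range (4*c+5)).filter (fun j => slot (r j) = y) with hfib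
    have hmono : ∀ j ∈ fib, (monoSubgraph (gg n) C).Adj (Sum.inl (g.1 y)) (pv hn0 g (r j)) := by
      intro j hj
      obtain ⟨hjr, hjy⟩ := Finset.mem_filter.1 hj
      rw [Finset.mem_range] at hjr
      have hrj : r j = j*(c+1) + tj j hjr := by simp only [hr, dif_pos hjr]
      refine And.intro ?_ ?_
      · simp only [pv, gAdj_lr]
        rw [show slot (r j % n) = slot (r j) by
          rw [Nat.mod_eq_of_lt (hrlt j hjr)]]
        exact congrArg g.1 hjy
      · show C (Sum.inl (g.1 y)) = C (pv hn0 g (r j))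
        have h1 : C (Sum.inl (g.1 y)) = k := hfk y
        have h2 : C (pv hn0 g (r j)) = k := by rw [hrj]; exact hCtj j hjr
        rw [h1, h2]
    -- build the big red set
    have hsub : ↑(fib.image (fun j => pv hn0 g (r j))) ⊆
        {w | (monoSubgraph (gg n) C).Reachable (Sum.inl (g.1 y)) w} := by
      intro x hx
      simp only [Finset.coe_image, Set.mem_image, Finset.mem_coe] at hx
      obtain ⟨j, hj, rfl⟩ := hx
      exact (hmono j hj).reachable
    have hcard : (fib.image (fun j => pv hn0 g (r j))).card = fib.card := by
      rw [Finset.card_image_of_injOn]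
      intro a ha b hb h
      simp only [Finset.mem_coe, hfib, Finset.mem_filter, Finset.mem_range] at ha hb
      have hra := pv_inj hn0 g (hrlt a ha.1) (hrlt b hb.1) h
      rw [show r a = a*(c+1) + tj a ha.1 by simp only [hr, dif_pos ha.1],
        show r b = b*(c+1) + tj b hb.1 by simp only [hr, dif_pos hb.1]] at hra
      exact (base_unique (by have := htj a ha.1; omega) (by have := htj b hb.1; omega) hra).1
    have := hcl (Sum.inl (g.1 y))
    have hge := Set.ncard_le_ncard hsub (Set.toFinite _)
    rw [Set.ncard_coe_finset, hcard] at hge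
    omega


end Stmt3Aux

/-- for every `c ≥ 1` there is a graph with girth exactly 6, feedback
vertex number at most 7 and pathwidth at most 8, with no 2-colouring of clustering `c`. -/
theorem stmt3 (c : ℕ) (hc : 1 ≤ c) :
    ∃ (V : Type) (_ : Fintype V) (G : SimpleGraph V),
      G.egirth = 6 ∧ FvnLE G 7 ∧ PathwidthLE G 8 ∧
      ∀ C : V → Fin 2, ¬ HasClustering G C c := by
  classical
  set n : ℕ := (4*c+5)*(c+1) with hn
  have hn5 : 5 ≤ n := by
    have : 9 * 2 ≤ (4*c+5)*(c+1) := Nat.mul_le_mul (by omega) (by omega)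
    omega
  refine ⟨Stmt3Aux.Vtx n, inferInstance, Stmt3Aux.gg n, ?_, ?_, ?_, ?_⟩
  · -- girth exactly 6
    apply le_antisymm
    · have hle : (Stmt3Aux.gg n).egirth ≤ ((Stmt3Aux.sixCycle n hn5).length : ℕ∞) := by
        rw [SimpleGraph.egirth]
        exact iInf_le_of_le _ (iInf_le_of_le (Stmt3Aux.sixCycle n hn5)
          (iInf_le _ (Stmt3Aux.sixCycle_isCycle n hn5)))
      rwa [Stmt3Aux.sixCycle_length n hn5] at hle
    · rw [SimpleGraph.le_egirth]
      intro a w hw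
      exact_mod_cast Stmt3Aux.girth_lb w hw
  · -- feedback vertex number
    refine ⟨Set.range Sum.inl, Set.toFinite _, ?_, Stmt3Aux.induced_acyclic n⟩
    rw [← Set.image_univ, Set.ncard_image_of_injective _ Sum.inl_injective, Set.ncard_univ]
    simp
  · exact Stmt3Aux.pw (by omega)
  · intro C
    exact Stmt3Aux.forcing c hc n hn C
end

section
/- Every graph G with feedback vertex number at most k and girth at least 7 admits a 2-colouring in which every monochromatic component has at most C(k,2) + k + 1 vertices. -/
open SimpleGraph Set

set_option linter.unusedSectionVars false
set_option maxHeartbeats 1000000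

namespace Stmt5Aux

open SimpleGraph.Walk

section Mach

variable {W : Type*} [DecidableEq W] (H : SimpleGraph W)

/-- canonical root of the component of `x` -/
noncomputable def rt (x : W) : W := (H.connectedComponentMk x).out

lemma reach_rt (x : W) : H.Reachable (rt H x) x :=
  ConnectedComponent.eq.mp (Quot.out_eq _)

/-- the canonical path from the root to `x` -/
noncomputable def pth (x : W) : H.Path (rt H x) x := (reach_rt H x).some.toPath

/-- the support list of the canonical path -/
noncomputable def LL (x : W) : List W := (pth H x).1.support

lemma end_mem_LL (x : W) : x ∈ LL H x := (pth H x).1.end_mem_support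

lemma rt_eq {x y : W} (h : H.Reachable x y) : rt H x = rt H y := by
  unfold rt; rw [ConnectedComponent.sound h]

lemma rt_idem (x : W) : rt H (rt H x) = rt H x := rt_eq H (reach_rt H x)

lemma path_eq (hH : H.IsAcyclic) {u v : W} (p q : H.Walk u v) (hp : p.IsPath)
    (hq : q.IsPath) : p = q :=
  congrArg Subtype.val (hH.path_unique ⟨p, hp⟩ ⟨q, hq⟩)

lemma LL_rev (x : W) : ∃ l, (LL H x).reverse = x :: l := by
  refine ⟨(pth H x).1.reverse.support.tail, ?_⟩
  rw [LL, ← support_reverse]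
  exact support_eq_cons _

lemma LL_takeUntil (hH : H.IsAcyclic) {x y : W} (hx : x ∈ LL H y) :
    LL H x = ((pth H y).1.takeUntil x hx).support := by
  have hre : H.Reachable (rt H y) x := ⟨(pth H y).1.takeUntil x hx⟩
  have hr : rt H x = rt H y := by
    have h1 := rt_eq H hre
    rw [rt_idem] at h1
    exact h1.symm
  have he : (pth H x).1.copy hr rfl = (pth H y).1.takeUntil x hx :=
    path_eq H hH _ _ ((isPath_copy _ _ _).mpr (pth H x).2) ((pth H y).2.takeUntil hx)
  rw [LL, ← support_copy (pth H x).1 hr rfl, he]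

lemma anc_lt (hH : H.IsAcyclic) {x y : W} (hx : x ∈ LL H y) (hne : x ≠ y) :
    (LL H x).length < (LL H y).length := by
  have h1 := LL_takeUntil H hH hx
  have h2 := take_spec (pth H y).1 hx
  have h3 : (pth H y).1.length =
      ((pth H y).1.takeUntil x hx).length + ((pth H y).1.dropUntil x hx).length := by
    conv_lhs => rw [← h2]
    rw [length_append]
  have h4 : ((pth H y).1.dropUntil x hx).length ≠ 0 := by
    intro h0
    exact hne (eq_of_length_eq_zero h0)
  have h5 : (LL H x).length = ((pth H y).1.takeUntil x hx).length + 1 := by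
    rw [h1, length_support]
  have h6 : (LL H y).length = (pth H y).1.length + 1 := length_support _
  omega

lemma step_rel (hH : H.IsAcyclic) {x y : W} (hxy : H.Adj x y) :
    LL H y = LL H x ++ [y] ∨ LL H x = LL H y ++ [x] := by
  have hr : rt H x = rt H y := rt_eq H hxy.reachable
  by_cases hy : y ∈ (pth H x).1.support
  · right
    have hx : x ∉ (pth H y).1.support := by
      intro hx
      have hy2 : y ∈ ((pth H y).1.takeUntil x hx).support := by
        have := LL_takeUntil H hH hx
        rw [LL] at this; rw [← this]; exact hy
      have hy3 : y ∈ ((pth H y).1.dropUntil x hx).support.tail := by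
        have h5 : y ∈ ((pth H y).1.dropUntil x hx).support := end_mem_support _
        rw [support_eq_cons] at h5
        rcases List.mem_cons.mp h5 with h5 | h5
        · exact absurd h5.symm hxy.ne
        · exact h5
      have hnd := (pth H y).2.support_nodup
      rw [← take_spec (pth H y).1 hx, support_append] at hnd
      exact (List.disjoint_of_nodup_append hnd) hy2 hy3
    have hcp : ((pth H y).1.concat hxy.symm).IsPath := by
      apply IsPath.mk'
      rw [support_concat]
      rw [List.nodup_append]
      exact ⟨(pth H y).2.support_nodup, List.nodup_singleton _,
        fun a ha b hb => by rw [List.mem_singleton] at hb; subst hb; exact fun h => hx (h ▸ ha)⟩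
    have he : (pth H x).1.copy hr rfl = (pth H y).1.concat hxy.symm :=
      path_eq H hH _ _ ((isPath_copy _ _ _).mpr (pth H x).2) hcp
    have h0 : LL H x = ((pth H x).1.copy hr rfl).support := (support_copy _ _ _).symm
    rw [h0, he, support_concat, LL]
  · left
    have hcp : ((pth H x).1.concat hxy).IsPath := by
      apply IsPath.mk'
      rw [support_concat]
      rw [List.nodup_append]
      exact ⟨(pth H x).2.support_nodup, List.nodup_singleton _,
        fun a ha b hb => by rw [List.mem_singleton] at hb; subst hb; exact fun h => hy (h ▸ ha)⟩
    have he : (pth H y).1.copy hr.symm rfl = (pth H x).1.concat hxy :=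
      path_eq H hH _ _ ((isPath_copy _ _ _).mpr (pth H y).2) hcp
    have h0 : LL H y = ((pth H y).1.copy hr.symm rfl).support := (support_copy _ _ _).symm
    rw [h0, he, support_concat, LL]

lemma down_propagate (hH : H.IsAcyclic) {x : W} {u y : W} (Q : H.Walk u y)
    (h1 : x ∈ LL H u) (h2 : x ≠ u) (h3 : x ∉ Q.support.tail) : x ∈ LL H y := by
  induction Q with
  | nil => exact h1
  | @cons u u' y h Q ih =>
    have htailQ : x ∉ Q.support := by
      rw [support_cons] at h3
      simpa using h3
    have hxu' : x ≠ u' := fun he => htailQ (he ▸ start_mem_support Q)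
    have h3' : x ∉ Q.support.tail := fun hm => htailQ (List.tail_subset _ hm)
    rcases step_rel H hH h with hrel | hrel
    · exact ih (by rw [hrel]; exact List.mem_append_left _ h1) hxu' h3'
    · refine ih ?_ hxu' h3'
      rw [hrel] at h1
      rcases List.mem_append.mp h1 with h' | h'
      · exact h'
      · rw [List.mem_singleton] at h'; exact absurd h' h2

lemma first_step (hH : H.IsAcyclic) {w t : W} (Q : H.Walk w t) (hQ : Q.IsPath)
    (hna : w ∉ LL H t) :
    ∃ u, H.Adj w u ∧ s(w, u) ∈ Q.edges ∧ LL H w = LL H u ++ [w] := by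
  cases Q with
  | nil => exact absurd (end_mem_LL H w) hna
  | @cons w u1 t h Q' =>
    rcases step_rel H hH h with hrel | hrel
    · exfalso
      apply hna
      apply down_propagate H hH Q'
      · rw [hrel]; exact List.mem_append_left _ (end_mem_LL H w)
      · exact h.ne
      · have hnd := hQ.support_nodup
        rw [support_cons] at hnd
        have hni : w ∉ Q'.support := (List.nodup_cons.mp hnd).1
        exact fun hm => hni (List.tail_subset _ hm)
    · exact ⟨u1, h, by rw [edges_cons]; exact List.mem_cons_self, hrel⟩

variable (SB : W → Bool)

open Fin.NatCast Fin.CommRing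

/-- the colour of a vertex -/
noncomputable def colw (x : W) : Fin 2 :=
  ((1 + ((LL H x).reverse.takeWhile (fun y => !(SB y))).length : ℕ) : Fin 2)

lemma colw_of_SB {x : W} (hx : SB x = true) : colw H SB x = 1 := by
  obtain ⟨l, hl⟩ := LL_rev H x
  rw [colw, hl, List.takeWhile_cons]
  simp [hx]

lemma colw_flip {x y : W} (hy : SB y = false) (hrel : LL H y = LL H x ++ [y]) :
    colw H SB y = colw H SB x + 1 := by
  rw [colw, colw, hrel]
  rw [List.reverse_append, List.reverse_singleton, List.singleton_append,
    List.takeWhile_cons]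
  simp only [hy, Bool.not_false, if_true, List.length_cons]
  push_cast
  ring

end Mach

section Cyc

variable {V : Type*} {G : SimpleGraph V}

lemma egirth_gt (hg : (7:ℕ∞) ≤ G.egirth) {a : V} (w : G.Walk a a) (hw : w.IsCycle)
    (hlen : w.length ≤ 6) : False := by
  have h := (SimpleGraph.le_egirth.mp hg) a w hw
  have h2 : (7:ℕ) ≤ w.length := by exact_mod_cast h
  omega

lemma cyc3 (hg : (7:ℕ∞) ≤ G.egirth) {a b c : V}
    (h1 : G.Adj a b) (h2 : G.Adj b c) (h3 : G.Adj c a) : False := by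
  have hab := h1.ne
  have hbc := h2.ne
  have hca := h3.ne
  refine egirth_gt hg (Walk.cons h1 (Walk.cons h2 (Walk.cons h3 Walk.nil))) ?_ (by simp)
  rw [Walk.isCycle_def]
  refine ⟨?_, by simp, ?_⟩
  · rw [Walk.isTrail_def]
    simp [Sym2.eq_iff]
    aesop
  · simp [List.nodup_cons]
    aesop

lemma cyc4 (hg : (7:ℕ∞) ≤ G.egirth) {a b c d : V}
    (h1 : G.Adj a b) (h2 : G.Adj b c) (h3 : G.Adj c d) (h4 : G.Adj d a)
    (hac : a ≠ c) (hbd : b ≠ d) : False := by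
  have hab := h1.ne
  have hbc := h2.ne
  have hcd := h3.ne
  have hda := h4.ne
  refine egirth_gt hg (Walk.cons h1 (Walk.cons h2 (Walk.cons h3 (Walk.cons h4 Walk.nil))))
    ?_ (by simp)
  rw [Walk.isCycle_def]
  refine ⟨?_, by simp, ?_⟩
  · rw [Walk.isTrail_def]
    simp [Sym2.eq_iff]
    aesop
  · simp [List.nodup_cons]
    aesop

lemma cyc6 (hg : (7:ℕ∞) ≤ G.egirth) {a b c d e f : V}
    (h1 : G.Adj a b) (h2 : G.Adj b c) (h3 : G.Adj c d) (h4 : G.Adj d e)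
    (h5 : G.Adj e f) (h6 : G.Adj f a)
    (hac : a ≠ c) (had : a ≠ d) (hae : a ≠ e) (hbd : b ≠ d) (hbe : b ≠ e)
    (hbf : b ≠ f) (hce : c ≠ e) (hcf : c ≠ f) (hdf : d ≠ f) : False := by
  have hab := h1.ne
  have hbc := h2.ne
  have hcd := h3.ne
  have hde := h4.ne
  have hef := h5.ne
  have hfa := h6.ne
  refine egirth_gt hg (Walk.cons h1 (Walk.cons h2 (Walk.cons h3 (Walk.cons h4
    (Walk.cons h5 (Walk.cons h6 Walk.nil)))))) ?_ (by simp)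
  rw [Walk.isCycle_def]
  refine ⟨?_, by simp, ?_⟩
  · rw [Walk.isTrail_def]
    simp [Sym2.eq_iff]
    aesop
  · simp [List.nodup_cons]
    aesop

lemma pair_eq [DecidableEq V] {a b c d : V} (h : ({a, b} : Finset V) = {c, d}) (hab : a ≠ b) :
    (a = c ∧ b = d) ∨ (a = d ∧ b = c) := by
  have ha : a ∈ ({c, d} : Finset V) := by rw [← h]; simp
  have hb : b ∈ ({c, d} : Finset V) := by rw [← h]; simp
  have hc : c ∈ ({a, b} : Finset V) := by rw [h]; simp
  simp only [Finset.mem_insert, Finset.mem_singleton] at ha hb hc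
  rcases ha with rfl | rfl <;> rcases hb with rfl | rfl <;> tauto

end Cyc

lemma reach_iff {V : Type*} {M : SimpleGraph V} {P : V → Prop}
    (h : ∀ x y, M.Adj x y → (P x ↔ P y)) {x y : V} (hr : M.Reachable x y) : P x ↔ P y := by
  obtain ⟨w⟩ := hr
  induction w with
  | nil => exact Iff.rfl
  | cons h' p ih => exact (h _ _ h').trans ih

lemma walk_transfer {V : Type*} {G : SimpleGraph V} {CC : V → Fin 2} {A : Set V}
    (hkeep : ∀ x y : V, (monoSubgraph G CC).Adj x y → x ∉ A → y ∉ A) :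
    ∀ {x y : V} (_ : (monoSubgraph G CC).Walk x y) (hx : x ∈ Aᶜ) (hy : y ∈ Aᶜ),
      ∃ Q : (G.induce Aᶜ).Walk ⟨x, hx⟩ ⟨y, hy⟩,
        ∀ p q : ↥(Aᶜ), s(p, q) ∈ Q.edges → CC ↑p = CC ↑q := by
  intro x y w
  induction w with
  | nil => intro hx hy; exact ⟨Walk.nil, by simp⟩
  | @cons x z y h p ih =>
    intro hx hy
    have hz : z ∈ Aᶜ := hkeep x z h hx
    obtain ⟨Q, hQ⟩ := ih hz hy
    have hadj : (G.induce Aᶜ).Adj ⟨x, hx⟩ ⟨z, hz⟩ := h.1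
    refine ⟨Walk.cons hadj Q, ?_⟩
    intro p q hpq
    rw [Walk.edges_cons] at hpq
    rcases List.mem_cons.mp hpq with he | he
    · rw [Sym2.eq_iff] at he
      rcases he with ⟨rfl, rfl⟩ | ⟨rfl, rfl⟩
      · exact h.2
      · exact h.2.symm
    · exact hQ p q he

end Stmt5Aux

/-- every graph with feedback vertex number at most `k` and girth at least 7
is 2-colourable with clustering `C(k,2) + k + 1`. -/
theorem stmt5 {V : Type*} [Fintype V] (k : ℕ) (G : SimpleGraph V)
    (h1 : FvnLE G k) (h2 : (7 : ℕ∞) ≤ G.egirth) :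
    ∃ C : V → Fin 2, HasClustering G C (k.choose 2 + k + 1) := by
  classical
  obtain ⟨A, hAfin, hAk, hac⟩ := h1
  let H : SimpleGraph ↥(Aᶜ) := G.induce Aᶜ
  have hacH : H.IsAcyclic := hac
  let S : Set ↥(Aᶜ) := {x | ∃ a ∈ A, G.Adj ↑x a}
  let SB : ↥(Aᶜ) → Bool := fun x => decide (x ∈ S)
  let CC : V → Fin 2 := fun v => if h : v ∈ Aᶜ then Stmt5Aux.colw H SB ⟨v, h⟩ else 0
  have hCA : ∀ a ∈ A, CC a = 0 := by
    intro a ha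
    simp only [CC]
    rw [dif_neg (by simp [ha])]
  have hCc : ∀ x : ↥(Aᶜ), CC ↑x = Stmt5Aux.colw H SB x := by
    intro x
    simp only [CC]
    rw [dif_pos x.2]
  have hS1 : ∀ x : ↥(Aᶜ), x ∈ S → CC ↑x = 1 := by
    intro x hx
    rw [hCc]
    exact Stmt5Aux.colw_of_SB H SB (by simp [SB, hx])
  have hkeep : ∀ x y : V, (monoSubgraph G CC).Adj x y → (x ∈ A ↔ y ∈ A) := by
    intro x y h
    constructor
    · intro hx
      by_contra hy
      have hA0 : CC x = 0 := hCA x hx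
      have hyc : y ∈ Aᶜ := hy
      have hA1 : CC y = 1 := hS1 ⟨y, hyc⟩ ⟨x, hx, h.1.symm⟩
      rw [h.2, hA1] at hA0
      exact absurd hA0 (by decide)
    · intro hy
      by_contra hx
      have hA0 : CC y = 0 := hCA y hy
      have hxc : x ∈ Aᶜ := hx
      have hA1 : CC x = 1 := hS1 ⟨x, hxc⟩ ⟨y, hy, h.1⟩
      rw [← h.2, hA1] at hA0
      exact absurd hA0 (by decide)
  have hkeep' : ∀ x y : V, (monoSubgraph G CC).Adj x y → x ∉ A → y ∉ A :=
    fun x y h hx hy => hx ((hkeep x y h).mpr hy)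
  have hreachA : ∀ {x y : V}, (monoSubgraph G CC).Reachable x y → (x ∈ A ↔ y ∈ A) :=
    fun hr => Stmt5Aux.reach_iff hkeep hr
  have hfin2 : ∀ z : Fin 2, z + 1 ≠ z := by decide
  have hchild : ∀ u w : ↥(Aᶜ), CC ↑u = CC ↑w →
      Stmt5Aux.LL H w = Stmt5Aux.LL H u ++ [w] → w ∈ S := by
    intro u w hCeq hrel
    by_contra hw
    have hSBw : SB w = false := by simp [SB, hw]
    have hfl := Stmt5Aux.colw_flip H SB hSBw hrel
    rw [← hCc, ← hCc] at hfl
    rw [hCeq] at hfl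
    exact hfin2 _ hfl.symm
  refine ⟨CC, ?_⟩
  intro v0
  set U : Set V := {w | (monoSubgraph G CC).Reachable v0 w} with hUdef
  have hUfin : U.Finite := Set.toFinite _
  by_cases hv0 : v0 ∈ A
  · have hsub : U ⊆ A := fun w hw => (hreachA hw).mp hv0
    calc U.ncard ≤ A.ncard := Set.ncard_le_ncard hsub hAfin
      _ ≤ k := hAk
      _ ≤ k.choose 2 + k + 1 := by omega
  · have hv0c : v0 ∈ Aᶜ := hv0
    have hUc : ∀ w ∈ U, w ∈ Aᶜ := fun w hw h => hv0 ((hreachA hw).mpr h)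
    have hv0U : v0 ∈ U := Reachable.refl v0
    let dep : V → ℕ := fun w => if h : w ∈ Aᶜ then (Stmt5Aux.LL H ⟨w, h⟩).length else 0
    obtain ⟨t, htU, htmin⟩ := Set.exists_min_image U dep hUfin ⟨v0, hv0U⟩
    have htc : t ∈ Aᶜ := hUc t htU
    have hC2 : ∀ w, w ∈ U → w ≠ t → ∃ u : ↥(Aᶜ),
        (monoSubgraph G CC).Adj ↑u w ∧ ↑u ∈ U ∧
        ∃ hw : w ∈ Aᶜ, Stmt5Aux.LL H ⟨w, hw⟩ = Stmt5Aux.LL H u ++ [⟨w, hw⟩] ∧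
          (⟨w, hw⟩ : ↥(Aᶜ)) ∈ S := by
      intro w hwU hwt
      have hw : w ∈ Aᶜ := hUc w hwU
      have hrwt : (monoSubgraph G CC).Reachable w t := (hwU : _).symm.trans htU
      obtain ⟨wk⟩ := hrwt
      obtain ⟨Q0, hQ0⟩ := Stmt5Aux.walk_transfer hkeep' wk hw htc
      have hQp := Q0.bypass_isPath
      have hQe : ∀ p q : ↥(Aᶜ), s(p, q) ∈ Q0.bypass.edges → CC ↑p = CC ↑q :=
        fun p q hpq => hQ0 p q (Walk.edges_bypass_subset _ hpq)
      have hna : (⟨w, hw⟩ : ↥(Aᶜ)) ∉ Stmt5Aux.LL H ⟨t, htc⟩ := by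
        intro hmem
        have hne : (⟨w, hw⟩ : ↥(Aᶜ)) ≠ ⟨t, htc⟩ := by
          intro hh
          exact hwt (congrArg Subtype.val hh)
        have hlt := Stmt5Aux.anc_lt H hacH hmem hne
        have hmin := htmin w hwU
        simp only [dep] at hmin
        rw [dif_pos hw, dif_pos htc] at hmin
        omega
      obtain ⟨u, hadj, hedge, hrel⟩ := Stmt5Aux.first_step H hacH Q0.bypass hQp hna
      have hCeq : CC w = CC ↑u := hQe _ _ hedge
      have hGadj : G.Adj ↑u w := (hadj.symm : H.Adj u ⟨w, hw⟩)
      have hmono : (monoSubgraph G CC).Adj ↑u w := ⟨hGadj, hCeq.symm⟩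
      have huU : ↑u ∈ U := (hwU : (monoSubgraph G CC).Reachable v0 w).trans hmono.symm.reachable
      have hwS : (⟨w, hw⟩ : ↥(Aᶜ)) ∈ S := hchild u ⟨w, hw⟩ hCeq.symm hrel
      exact ⟨u, hmono, huU, hw, hrel, hwS⟩
    have hC2' : ∀ w : V, ∃ u : ↥(Aᶜ), (w ∈ U ∧ w ≠ t) →
        ((monoSubgraph G CC).Adj ↑u w ∧ ↑u ∈ U ∧
        ∃ hw : w ∈ Aᶜ, Stmt5Aux.LL H ⟨w, hw⟩ = Stmt5Aux.LL H u ++ [⟨w, hw⟩] ∧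
          (⟨w, hw⟩ : ↥(Aᶜ)) ∈ S) := by
      intro w
      by_cases h : w ∈ U ∧ w ≠ t
      · obtain ⟨u, hu⟩ := hC2 w h.1 h.2
        exact ⟨u, fun _ => hu⟩
      · exact ⟨⟨v0, hv0c⟩, fun hc => absurd hc h⟩
    choose Pa hPa using hC2'
    have hΦ' : ∀ w : V, ∃ a : V, (∃ b ∈ A, G.Adj w b) → a ∈ A ∧ G.Adj w a := by
      intro w
      by_cases h : ∃ b ∈ A, G.Adj w b
      · obtain ⟨b, hb, hab⟩ := h
        exact ⟨b, fun _ => ⟨hb, hab⟩⟩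
      · exact ⟨v0, fun hc => absurd hc h⟩
    choose Φ hΦ using hΦ'
    have htri : ∀ x y : V, G.Adj x y → (∃ b ∈ A, G.Adj x b) → (∃ b ∈ A, G.Adj y b) →
        Φ x ≠ Φ y := by
      intro x y hxy hx hy he
      obtain ⟨hxA, hxadj⟩ := hΦ x hx
      obtain ⟨hyA, hyadj⟩ := hΦ y hy
      exact Stmt5Aux.cyc3 h2 hxy hyadj (by rw [← he]; exact hxadj.symm)
    let U1 : Set V := {w | (w ∈ U ∧ w ≠ t) ∧ (↑(Pa w) : V) = t}
    let U2 : Set V := {w | (w ∈ U ∧ w ≠ t) ∧ (↑(Pa w) : V) ≠ t}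
    have hcover : U ⊆ insert t (U1 ∪ U2) := by
      intro w hw
      by_cases hwt : w = t
      · exact Set.mem_insert_iff.mpr (Or.inl hwt)
      · refine Set.mem_insert_iff.mpr (Or.inr ?_)
        by_cases hp : (↑(Pa w) : V) = t
        · exact Or.inl ⟨⟨hw, hwt⟩, hp⟩
        · exact Or.inr ⟨⟨hw, hwt⟩, hp⟩
    have hU1 : U1.ncard ≤ k := by
      have hmaps : ∀ w ∈ U1, Φ w ∈ A := by
        intro w hw
        obtain ⟨hm, hpU, hwc, hrel, hwS⟩ := hPa w hw.1
        exact (hΦ w hwS).1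
      have hinj : Set.InjOn Φ U1 := by
        intro w hw w' hw' he
        by_contra hnew
        obtain ⟨hm, hpU, hwc, hrel, hwS⟩ := hPa w hw.1
        obtain ⟨hm', hpU', hwc', hrel', hwS'⟩ := hPa w' hw'.1
        obtain ⟨hawA, hawadj⟩ := hΦ w hwS
        obtain ⟨haw'A, haw'adj⟩ := hΦ w' hwS'
        have hGw : G.Adj (↑(Pa w) : V) w := hm.1
        have hGw' : G.Adj (↑(Pa w') : V) w' := hm'.1
        have hGt : G.Adj t w := by rw [← hw.2]; exact hGw
        have hGt' : G.Adj w' t := by rw [← hw'.2]; exact hGw'.symm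
        refine Stmt5Aux.cyc4 h2 hawadj (by rw [he]; exact haw'adj.symm) hGt' hGt hnew ?_
        intro hcon
        exact htc (by rw [← hcon]; exact hawA)
      calc U1.ncard ≤ A.ncard := Set.ncard_le_ncard_of_injOn Φ hmaps hinj hAfin
        _ ≤ k := hAk
    have hU2 : U2.ncard ≤ k.choose 2 := by
      have hmaps : ∀ w ∈ U2, ({Φ ↑(Pa w), Φ w} : Finset V) ∈
          ((hAfin.toFinset.powersetCard 2 : Finset (Finset V)) : Set (Finset V)) := by
        intro w hw
        obtain ⟨hm, hpU, hwc, hrel, hwS⟩ := hPa w hw.1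
        obtain ⟨hmp, hppU, hpwc, hprel, hpwS⟩ := hPa (↑(Pa w)) ⟨hpU, hw.2⟩
        have hGw : G.Adj (↑(Pa w) : V) w := hm.1
        have hnp : Φ ↑(Pa w) ≠ Φ w := htri _ _ hGw hpwS hwS
        simp only [Finset.mem_coe, Finset.mem_powersetCard]
        constructor
        · intro x hx
          simp only [Finset.mem_insert, Finset.mem_singleton] at hx
          rcases hx with rfl | rfl
          · exact hAfin.mem_toFinset.mpr (hΦ _ hpwS).1
          · exact hAfin.mem_toFinset.mpr (hΦ _ hwS).1
        · exact Finset.card_pair hnp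
      have hinj : Set.InjOn (fun w => ({Φ ↑(Pa w), Φ w} : Finset V)) U2 := by
        intro w hw w' hw' he
        by_contra hnew
        simp only at he
        obtain ⟨hm, hpU, hwc, hrel, hwS⟩ := hPa w hw.1
        obtain ⟨hm', hpU', hwc', hrel', hwS'⟩ := hPa w' hw'.1
        obtain ⟨hmp, hppU, hpwc, hprel, hpwS⟩ := hPa (↑(Pa w)) ⟨hpU, hw.2⟩
        obtain ⟨hmp', hppU', hpwc', hprel', hpwS'⟩ := hPa (↑(Pa w')) ⟨hpU', hw'.2⟩
        have hGw : G.Adj (↑(Pa w) : V) w := hm.1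
        have hGw' : G.Adj (↑(Pa w') : V) w' := hm'.1
        obtain ⟨hawA, hawadj⟩ := hΦ w hwS
        obtain ⟨haw'A, haw'adj⟩ := hΦ w' hwS'
        obtain ⟨hapwA, hapwadj⟩ := hΦ _ hpwS
        obtain ⟨hapw'A, hapw'adj⟩ := hΦ _ hpwS'
        have hnp : Φ ↑(Pa w) ≠ Φ w := htri _ _ hGw hpwS hwS
        have hnp' : Φ ↑(Pa w') ≠ Φ w' := htri _ _ hGw' hpwS' hwS'
        have hlw : (Stmt5Aux.LL H ⟨w, hwc⟩).length = (Stmt5Aux.LL H (Pa w)).length + 1 := by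
          rw [hrel]; simp
        have hlw' : (Stmt5Aux.LL H ⟨w', hwc'⟩).length = (Stmt5Aux.LL H (Pa w')).length + 1 := by
          rw [hrel']; simp
        rcases Stmt5Aux.pair_eq he hnp with ⟨e1, e2⟩ | ⟨e1, e2⟩
        · -- e1 : Φ pw = Φ pw', e2 : Φ w = Φ w'
          by_cases hpp : (↑(Pa w) : V) = ↑(Pa w')
          · have hb1 : G.Adj (Φ w) w' := by rw [e2]; exact haw'adj.symm
            have hb2 : G.Adj w' ↑(Pa w) := by rw [hpp]; exact hGw'.symm
            exact Stmt5Aux.cyc4 h2 hawadj hb1 hb2 hGw hnew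
              (fun hcon => (Pa w).2 (by rw [← hcon]; exact hawA))
          by_cases hwp' : w = (↑(Pa w') : V)
          · exact hnp (by rw [e1, ← hwp'])
          by_cases hw'p : (↑(Pa w) : V) = w'
          · exact hnp (by rw [hw'p, ← e2])
          · have hb4 : G.Adj (Φ w) w' := by rw [e2]; exact haw'adj.symm
            have hb6 : G.Adj (↑(Pa w') : V) (Φ ↑(Pa w)) := by rw [e1]; exact hapw'adj
            exact Stmt5Aux.cyc6 h2 hapwadj.symm hGw hawadj hb4 hGw'.symm hb6
              (fun h => hwc (by rw [← h]; exact hapwA))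
              hnp
              (fun h => hwc' (by rw [← h]; exact hapwA))
              (fun h => (Pa w).2 (by rw [h]; exact hawA))
              hw'p
              hpp
              hnew
              hwp'
              (fun h => (Pa w').2 (by rw [← h]; exact hawA))
        · -- e1 : Φ pw = Φ w', e2 : Φ w = Φ pw'
          by_cases hpp : (↑(Pa w) : V) = ↑(Pa w')
          · exact hnp (by rw [hpp, ← e2])
          by_cases hwp' : w = (↑(Pa w') : V)
          · by_cases hw'p : (↑(Pa w) : V) = w'
            · have hPw : Pa w = (⟨w', hwc'⟩ : ↥(Aᶜ)) := Subtype.ext hw'p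
              have hPw' : Pa w' = (⟨w, hwc⟩ : ↥(Aᶜ)) := Subtype.ext hwp'.symm
              rw [hPw] at hlw
              rw [hPw'] at hlw'
              omega
            · have hb2 : G.Adj w w' := by rw [hwp']; exact hGw'
              have hb4 : G.Adj (Φ w') ↑(Pa w) := by rw [← e1]; exact hapwadj.symm
              exact Stmt5Aux.cyc4 h2 hGw hb2 haw'adj hb4 hw'p
                (fun h => hwc (by rw [h]; exact haw'A))
          by_cases hw'p : (↑(Pa w) : V) = w'
          · by_cases hpw'w : (↑(Pa w') : V) = w
            · have hPw : Pa w = (⟨w', hwc'⟩ : ↥(Aᶜ)) := Subtype.ext hw'p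
              have hPw' : Pa w' = (⟨w, hwc⟩ : ↥(Aᶜ)) := Subtype.ext hpw'w
              rw [hPw] at hlw
              rw [hPw'] at hlw'
              omega
            · have hb2 : G.Adj w' w := by rw [← hw'p]; exact hGw
              have hb4 : G.Adj (Φ w) ↑(Pa w') := by rw [e2]; exact hapw'adj.symm
              exact Stmt5Aux.cyc4 h2 hGw' hb2 hawadj hb4 hpw'w
                (fun h => hwc' (by rw [h]; exact hawA))
          · have hb4 : G.Adj (Φ w) ↑(Pa w') := by rw [e2]; exact hapw'adj.symm
            have hb6 : G.Adj w' (Φ ↑(Pa w)) := by rw [e1]; exact haw'adj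
            exact Stmt5Aux.cyc6 h2 hapwadj.symm hGw hawadj hb4 hGw' hb6
              (fun h => hwc (by rw [← h]; exact hapwA))
              hnp
              (fun h => (Pa w').2 (by rw [← h]; exact hapwA))
              (fun h => (Pa w).2 (by rw [h]; exact hawA))
              hpp
              hw'p
              hwp'
              hnew
              (fun h => hwc' (by rw [← h]; exact hawA))
      have hle := Set.ncard_le_ncard_of_injOn _ hmaps hinj (Finset.finite_toSet _)
      rw [Set.ncard_coe_finset, Finset.card_powersetCard] at hle
      have hcard : hAfin.toFinset.card ≤ k := by
        rw [← Set.ncard_eq_toFinset_card _ hAfin]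
        exact hAk
      exact hle.trans (Nat.choose_le_choose 2 hcard)
    calc U.ncard ≤ (insert t (U1 ∪ U2)).ncard := Set.ncard_le_ncard hcover (Set.toFinite _)
      _ ≤ (U1 ∪ U2).ncard + 1 := Set.ncard_insert_le _ _
      _ ≤ U1.ncard + U2.ncard + 1 := by
          have := Set.ncard_union_le U1 U2
          omega
      _ ≤ k.choose 2 + k + 1 := by omega
end

section
/- Let s,t ≥ 1 and let G be a graph with no K_{s,t} subgraph. Then G admits a proper-in-part s-colouring with defect at most col_2(G) + (t−1)·C(col_2(G), s−1); that is, an s-colouring in which every monochromatic component has maximum degree at most col_2(G) + (t−1)·C(col_2(G), s−1). -/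
open SimpleGraph Set

section Greedy

open Classical

variable {V : Type*} [Fintype V] [LinearOrder V] (G : SimpleGraph V) (s : ℕ)

/-- A colour `c` is good for `v` given the colouring `f` of earlier vertices if either no
back-neighbour of `v` is coloured `c`, or every colour appears on a back-neighbour that is
`≤` all `c`-coloured back-neighbours. -/
def isGoodCol (v : V) (f : V → Fin s) (c : Fin s) : Prop :=
  (∀ w, G.Adj v w → w < v → f w ≠ c) ∨
  (∀ c' : Fin s, ∃ w, G.Adj v w ∧ w < v ∧ f w = c' ∧
     ∀ w', G.Adj v w' → w' < v → f w' = c → w ≤ w')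

lemma isGoodCol_congr {v : V} {c : Fin s} {f g : V → Fin s}
    (hfg : ∀ w, w < v → f w = g w) (h : isGoodCol G s v f c) : isGoodCol G s v g c := by
  rcases h with h | h
  · exact Or.inl fun w hw hlt => (hfg w hlt) ▸ h w hw hlt
  · refine Or.inr fun c' => ?_
    obtain ⟨w, h1, h2, h3, h4⟩ := h c'
    exact ⟨w, h1, h2, (hfg w h2) ▸ h3, fun w' hw' hlt hc => h4 w' hw' hlt ((hfg w' hlt) ▸ hc)⟩

lemma exists_goodCol (hs : 0 < s) (v : V) (f : V → Fin s) :
    ∃ c, isGoodCol G s v f c := by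
  by_cases hall : ∀ c' : Fin s, ∃ w, G.Adj v w ∧ w < v ∧ f w = c'
  · -- every colour is used on a back-neighbour; pick the colour whose least
    -- representative is largest
    have hne : ∀ c' : Fin s,
        (Finset.univ.filter fun w => G.Adj v w ∧ w < v ∧ f w = c').Nonempty := by
      intro c'
      obtain ⟨w, hw⟩ := hall c'
      exact ⟨w, by simpa using hw⟩
    set m : Fin s → V := fun c' => (Finset.univ.filter
      fun w => G.Adj v w ∧ w < v ∧ f w = c').min' (hne c') with hm
    obtain ⟨c₀, -, hmax⟩ := Finset.exists_max_image Finset.univ m ⟨⟨0, hs⟩, Finset.mem_univ _⟩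
    refine ⟨c₀, Or.inr fun c' => ?_⟩
    have hmem : m c' ∈ Finset.univ.filter fun w => G.Adj v w ∧ w < v ∧ f w = c' :=
      Finset.min'_mem _ (hne c')
    simp only [Finset.mem_filter] at hmem
    refine ⟨m c', hmem.2.1, hmem.2.2.1, hmem.2.2.2, fun w' hw' hlt hc => ?_⟩
    have hw'mem : w' ∈ Finset.univ.filter fun w => G.Adj v w ∧ w < v ∧ f w = c₀ := by
      simp [hw', hlt, hc]
    exact le_trans (hmax c' (Finset.mem_univ _)) (Finset.min'_le _ _ hw'mem)
  · rw [not_forall] at hall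
    obtain ⟨c, hc⟩ := hall
    exact ⟨c, Or.inl fun w hw hlt hcol => hc ⟨w, hw, hlt, hcol⟩⟩

/-- The greedy colouring along the linear order. -/
noncomputable def greedyCol (hs : 0 < s) : V → Fin s :=
  (wellFounded_lt (α := V)).fix fun v ih =>
    Classical.choose (exists_goodCol G s hs v fun w => if h : w < v then ih w h else ⟨0, hs⟩)

lemma greedyCol_good (hs : 0 < s) (v : V) :
    isGoodCol G s v (greedyCol G s hs) (greedyCol G s hs v) := by
  refine isGoodCol_congr G s
    (f := fun w => if _ : w < v then greedyCol G s hs w else ⟨0, hs⟩)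
    (fun w hw => by simp [hw]) ?_
  have hfix : greedyCol G s hs v = Classical.choose
      (exists_goodCol G s hs v fun w => if _ : w < v then greedyCol G s hs w else ⟨0, hs⟩) := by
    conv_lhs => rw [greedyCol, WellFounded.fix_eq]
    rfl
  rw [hfix]
  exact Classical.choose_spec (exists_goodCol G s hs v _)

end Greedy

lemma stmt6_aux {V : Type*} [Fintype V] [LinearOrder V] (s t k : ℕ) (hs : 1 ≤ s) (ht : 1 ≤ t)
    (G : SimpleGraph V) (h : ¬ HasKstSubgraph G s t)
    (hk : ∀ v, {w | TwoReach G (· ≤ ·) v w}.ncard ≤ k) :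
    ∃ C : V → Fin s, HasDefect G C (k + (t - 1) * k.choose (s - 1)) := by
  classical
  set C := greedyCol G s hs with hC
  refine ⟨C, fun v => ?_⟩
  -- split the monochromatic neighbourhood into back- and forward-neighbours
  have hsplit : {w | G.Adj v w ∧ C w = C v} ⊆
      {w | G.Adj v w ∧ C w = C v ∧ w < v} ∪ {u | G.Adj v u ∧ C u = C v ∧ v < u} := by
    intro w hw
    rcases lt_or_gt_of_ne (fun e : w = v => G.loopless.irrefl v (e ▸ hw.1.symm)) with hlt | hgt
    · exact Or.inl ⟨hw.1, hw.2, hlt⟩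
    · exact Or.inr ⟨hw.1, hw.2, hgt⟩
  have hback : {w | G.Adj v w ∧ C w = C v ∧ w < v}.ncard ≤ k := by
    refine le_trans (Set.ncard_le_ncard ?_ (Set.toFinite _)) (hk v)
    intro w hw
    exact Or.inr ⟨le_of_lt hw.2.2, Or.inl hw.1⟩
  have hfwd : {u | G.Adj v u ∧ C u = C v ∧ v < u}.ncard ≤ (t - 1) * k.choose (s - 1) := by
    by_contra hgt
    push_neg at hgt
    -- the set of vertices 2-reachable from v, minus v itself
    set T : Finset V := ((Set.toFinite {w | TwoReach G (· ≤ ·) v w}).toFinset).erase v with hT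
    have hTlt : ∀ w ∈ T, w < v := by
      intro w hw
      rw [hT, Finset.mem_erase, Set.Finite.mem_toFinset] at hw
      rcases hw.2 with rfl | h2
      · exact absurd rfl hw.1
      · exact lt_of_le_of_ne h2.1 hw.1
    have hTcard : T.card ≤ k := by
      have hkv := hk v
      rw [Set.ncard_eq_toFinset_card _ (Set.toFinite _)] at hkv
      exact le_trans (Finset.card_le_card (Finset.erase_subset _ _)) hkv
    set Fwd : Finset V := Finset.univ.filter (fun u => G.Adj v u ∧ C u = C v ∧ v < u) with hFwd
    have hFwdcard : (t - 1) * k.choose (s - 1) < Fwd.card := by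
      have he : (Set.toFinite {u | G.Adj v u ∧ C u = C v ∧ v < u}).toFinset = Fwd := by
        ext u
        rw [Set.Finite.mem_toFinset]
        simp [hFwd]
      rwa [Set.ncard_eq_toFinset_card _ (Set.toFinite _), he] at hgt
    -- for each forward monochromatic neighbour, extract its witness set
    have key : ∀ u : V, ∃ S : Finset V, (G.Adj v u ∧ C u = C v ∧ v < u) →
        S.card = s - 1 ∧ S ⊆ T ∧ ∀ w ∈ S, G.Adj u w := by
      intro u
      by_cases hu : G.Adj v u ∧ C u = C v ∧ v < u
      swap
      · exact ⟨∅, fun h' => absurd h' hu⟩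
      obtain ⟨hadj, hcol, hlt⟩ := hu
      have hgood := greedyCol_good G s hs u
      rw [← hC] at hgood
      rcases hgood with hbad | hgood
      · exact absurd hcol.symm (hbad v hadj.symm hlt)
      -- witnesses for each colour other than C u
      have hw : ∀ c' : Fin s, ∃ w, G.Adj u w ∧ w < u ∧ C w = c' ∧
          ∀ w', G.Adj u w' → w' < u → C w' = C u → w ≤ w' := hgood
      set wit : Fin s → V := fun c' => Classical.choose (hw c') with hwit
      have hwspec : ∀ c', G.Adj u (wit c') ∧ wit c' < u ∧ C (wit c') = c' ∧
          ∀ w', G.Adj u w' → w' < u → C w' = C u → wit c' ≤ w' :=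
        fun c' => Classical.choose_spec (hw c')
      refine ⟨(Finset.univ.erase (C u)).image wit, fun _ => ⟨?_, ?_, ?_⟩⟩
      · have hinj : Set.InjOn wit (Finset.univ.erase (C u)) := by
          intro c₁ _ c₂ _ he
          rw [← (hwspec c₁).2.2.1, ← (hwspec c₂).2.2.1, he]
        rw [Finset.card_image_of_injOn hinj, Finset.card_erase_of_mem (Finset.mem_univ _),
          Finset.card_univ, Fintype.card_fin]
      · intro w hwmem
        obtain ⟨c', hc', rfl⟩ := Finset.mem_image.mp hwmem
        rw [Finset.mem_erase] at hc'
        obtain ⟨hadj', hlt', hcol', hmin⟩ := hwspec c'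
        have hlev : wit c' ≤ v := hmin v hadj.symm hlt (hcol.symm ▸ rfl)
        have hne : wit c' ≠ v := fun e => hc'.1 (by rw [← hcol', e, hcol])
        rw [hT, Finset.mem_erase, Set.Finite.mem_toFinset]
        exact ⟨hne, Or.inr ⟨hlev, Or.inr ⟨u, le_of_lt hlt, ne_of_gt hlt, hadj, hadj'⟩⟩⟩
      · intro w hwmem
        obtain ⟨c', _, rfl⟩ := Finset.mem_image.mp hwmem
        exact (hwspec c').1
    choose S hS using key
    -- pigeonhole over the possible witness sets
    have hmaps : ∀ u ∈ Fwd, S u ∈ T.powersetCard (s - 1) := by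
      intro u hu
      rw [hFwd, Finset.mem_filter] at hu
      obtain ⟨hcard, hsub, -⟩ := hS u hu.2
      exact Finset.mem_powersetCard.mpr ⟨hsub, hcard⟩
    have hPcard : (T.powersetCard (s - 1)).card ≤ k.choose (s - 1) := by
      rw [Finset.card_powersetCard]
      exact Nat.choose_le_choose _ hTcard
    have hmul : (T.powersetCard (s - 1)).card * (t - 1) < Fwd.card := by
      calc (T.powersetCard (s - 1)).card * (t - 1) ≤ k.choose (s - 1) * (t - 1) :=
            Nat.mul_le_mul_right _ hPcard
        _ = (t - 1) * k.choose (s - 1) := Nat.mul_comm _ _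
        _ < Fwd.card := hFwdcard
    obtain ⟨S₀, hS₀mem, hfib⟩ := Finset.exists_lt_card_fiber_of_mul_lt_card_of_maps_to hmaps hmul
    obtain ⟨hS₀sub, hS₀card⟩ := Finset.mem_powersetCard.mp hS₀mem
    obtain ⟨B, hBsub, hBcard⟩ := Finset.exists_subset_card_eq (s := Fwd.filter fun u => S u = S₀) (n := t) (by omega)
    -- build the K_{s,t}
    have hvS₀ : v ∉ S₀ := fun hv => lt_irrefl v (hTlt v (hS₀sub hv))
    refine h ⟨insert v S₀, B, ?_, ?_, hBcard, ?_⟩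
    · rw [Finset.disjoint_left]
      intro a ha hb
      have hbF := hBsub hb
      rw [Finset.mem_filter, hFwd, Finset.mem_filter] at hbF
      have hvb : v < a := hbF.1.2.2.2
      rcases Finset.mem_insert.mp ha with rfl | ha'
      · exact lt_irrefl a hvb
      · exact absurd (lt_trans hvb (hTlt a (hS₀sub ha'))) (lt_irrefl v)
    · rw [Finset.card_insert_of_notMem hvS₀, hS₀card]
      omega
    · intro a ha b hb
      have hbF := hBsub hb
      rw [Finset.mem_filter, hFwd, Finset.mem_filter] at hbF
      obtain ⟨⟨-, hbadj, hbcol, hblt⟩, hbS⟩ := hbF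
      rcases Finset.mem_insert.mp ha with rfl | ha'
      · exact hbadj
      · have := (hS b ⟨hbadj, hbcol, hblt⟩).2.2 a (hbS ▸ ha')
        exact this.symm
  calc {w | G.Adj v w ∧ C w = C v}.ncard
      ≤ ({w | G.Adj v w ∧ C w = C v ∧ w < v} ∪ {u | G.Adj v u ∧ C u = C v ∧ v < u}).ncard :=
        Set.ncard_le_ncard hsplit (Set.toFinite _)
    _ ≤ {w | G.Adj v w ∧ C w = C v ∧ w < v}.ncard +
        {u | G.Adj v u ∧ C u = C v ∧ v < u}.ncard := Set.ncard_union_le _ _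
    _ ≤ k + (t - 1) * k.choose (s - 1) := Nat.add_le_add hback hfwd

/-- every `K_{s,t}`-subgraph-free graph is `s`-colourable with defect at most
`col₂(G) + (t-1) * C(col₂(G), s-1)`. -/
theorem stmt6 {V : Type*} [Fintype V] (s t : ℕ) (hs : 1 ≤ s) (ht : 1 ≤ t)
    (G : SimpleGraph V) (h : ¬ HasKstSubgraph G s t) :
    ∃ C : V → Fin s,
      HasDefect G C (col2 G + (t - 1) * (col2 G).choose (s - 1)) := by
  classical
  -- the defining set of col2 is nonempty
  have hne : {m | ∃ r : V → V → Prop, IsLinearOrder V r ∧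
      ∀ v, {w | TwoReach G r v w}.ncard ≤ m}.Nonempty := by
    letI : LinearOrder V := linearOrderOfSTO (WellOrderingRel (α := V))
    refine ⟨Fintype.card V, (· ≤ ·), inferInstance, fun v => ?_⟩
    calc {w | TwoReach G (· ≤ ·) v w}.ncard ≤ (Set.univ : Set V).ncard :=
          Set.ncard_le_ncard (Set.subset_univ _) Set.finite_univ
      _ = Fintype.card V := by rw [Set.ncard_univ, Nat.card_eq_fintype_card]
  obtain ⟨r, hlin, hbound⟩ := Nat.sInf_mem hne
  haveI := hlin
  letI : LinearOrder V :=
    { le := r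
      le_refl := fun a => refl_of r a
      le_trans := fun a b c => trans_of r
      le_antisymm := fun a b => antisymm_of r
      le_total := fun a b => total_of r a b
      toDecidableLE := fun a b => Classical.dec _ }
  exact stmt6_aux s t (col2 G) hs ht G h hbound
end

section
/- Every graph G with no K_{2,2} subgraph admits a 2-colouring in which every monochromatic component has maximum degree at most 2·col_2(G). -/
open SimpleGraph Set

/-! ### Auxiliary material for stmt7 -/

/-- Build a `LinearOrder` from an `IsLinearOrder` relation, with `le` literally `r`. -/
noncomputable def isLinearOrderToLinearOrder {V : Type*} (r : V → V → Prop)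
    (h : IsLinearOrder V r) : LinearOrder V where
  le := r
  le_refl := fun a => h.toIsPartialOrder.toIsPreorder.toRefl.refl a
  le_trans := fun a b c hab hbc => h.toIsPartialOrder.toIsPreorder.toIsTrans.trans a b c hab hbc
  le_antisymm := fun a b hab hba => h.toIsPartialOrder.toAntisymm.antisymm a b hab hba
  le_total := fun a b => h.toTotal.total a b
  toDecidableLE := fun a b => Classical.dec _

section StmtSevenAux

variable {V : Type*} [Fintype V] [LinearOrder V]

open Classical in
/-- The neighbours of `v` which come strictly before `v`. -/
noncomputable def earlierNbrs (G : SimpleGraph V) (v : V) : Finset V :=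
  Finset.univ.filter (fun w => G.Adj v w ∧ w < v)

lemma mem_earlierNbrs {G : SimpleGraph V} {v w : V} :
    w ∈ earlierNbrs G v ↔ G.Adj v w ∧ w < v := by
  classical
  simp [earlierNbrs]

/-- The minimum earlier neighbour of `u` (or `u` itself if none). -/
noncomputable def minB (G : SimpleGraph V) (u : V) : V :=
  if h : (earlierNbrs G u).Nonempty then (earlierNbrs G u).min' h else u

lemma minB_mem {G : SimpleGraph V} {u : V} (h : (earlierNbrs G u).Nonempty) :
    G.Adj u (minB G u) ∧ minB G u < u := by
  rw [minB, dif_pos h]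
  exact mem_earlierNbrs.mp ((earlierNbrs G u).min'_mem h)

lemma minB_le {G : SimpleGraph V} {u w : V} (h : (earlierNbrs G u).Nonempty)
    (hw : w ∈ earlierNbrs G u) : minB G u ≤ w := by
  rw [minB, dif_pos h]
  exact (earlierNbrs G u).min'_le w hw

/-- The forest 2-colouring: parity along the chain of minimum earlier neighbours. -/
noncomputable def colorAux (G : SimpleGraph V) : V → Fin 2 :=
  WellFounded.fix wellFounded_lt (fun v ih =>
    if h : (earlierNbrs G v).Nonempty then
      1 + ih ((earlierNbrs G v).min' h)
        ((mem_earlierNbrs.mp ((earlierNbrs G v).min'_mem h)).2)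
    else 0)

lemma colorAux_spec {G : SimpleGraph V} {v : V} (h : (earlierNbrs G v).Nonempty) :
    colorAux G v = 1 + colorAux G (minB G v) := by
  rw [minB, dif_pos h]
  conv_lhs => rw [colorAux]
  rw [WellFounded.fix_eq, dif_pos h]
  rfl

lemma one_add_ne_fin2 : ∀ x : Fin 2, 1 + x ≠ x := by decide

lemma no_two_common {G : SimpleGraph V} (hK : ¬ HasKstSubgraph G 2 2)
    {u1 u2 w1 w2 : V} (hu : u1 ≠ u2) (hw : w1 ≠ w2)
    (h11 : G.Adj u1 w1) (h12 : G.Adj u1 w2) (h21 : G.Adj u2 w1) (h22 : G.Adj u2 w2) :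
    False := by
  classical
  apply hK
  refine ⟨{u1, u2}, {w1, w2}, ?_, Finset.card_pair hu, Finset.card_pair hw, ?_⟩
  · rw [Finset.disjoint_left]
    intro a ha hb
    simp only [Finset.mem_insert, Finset.mem_singleton] at ha hb
    rcases ha with rfl | rfl <;> rcases hb with h | h <;>
      first
        | exact h11.ne h | exact h12.ne h | exact h21.ne h | exact h22.ne h
  · intro a ha b hb
    simp only [Finset.mem_insert, Finset.mem_singleton] at ha hb
    rcases ha with rfl | rfl <;> rcases hb with rfl | rfl <;> assumption

theorem stmt7Aux (G : SimpleGraph V) (hK : ¬ HasKstSubgraph G 2 2) (k : ℕ)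
    (hk : ∀ v, {w | TwoReach G (· ≤ ·) v w}.ncard ≤ k) :
    ∃ C : V → Fin 2, HasDefect G C (2 * k) := by
  classical
  refine ⟨colorAux G, fun v => ?_⟩
  set C := colorAux G with hC
  set R : Set V := {w | TwoReach G (· ≤ ·) v w} with hR
  have hvR : v ∈ R := Or.inl rfl
  set S1 : Set V := {w | G.Adj v w ∧ C w = C v ∧ w < v} with hS1
  set S2 : Set V := {w | G.Adj v w ∧ C w = C v ∧ v < w} with hS2
  -- Bound on back-neighbours
  have h1 : S1.ncard + 1 ≤ k := by
    have hins : insert v S1 ⊆ R := by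
      rintro w hw
      rcases Set.mem_insert_iff.mp hw with rfl | ⟨hadj, _, hlt⟩
      · exact hvR
      · exact Or.inr ⟨le_of_lt hlt, Or.inl hadj⟩
    have hnm : v ∉ S1 := fun hv => lt_irrefl v hv.2.2
    calc S1.ncard + 1 = (insert v S1).ncard :=
          (Set.ncard_insert_of_notMem hnm (Set.toFinite _)).symm
      _ ≤ R.ncard := Set.ncard_le_ncard hins (Set.toFinite _)
      _ ≤ k := hk v
  -- Each forward monochromatic neighbour has earlier neighbours
  have hne2 : ∀ u ∈ S2, (earlierNbrs G u).Nonempty := by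
    intro u hu
    exact ⟨v, mem_earlierNbrs.mpr ⟨hu.1.symm, hu.2.2⟩⟩
  -- Its minimum earlier neighbour lies strictly before v
  have hmlt : ∀ u ∈ S2, minB G u < v := by
    intro u hu
    have hle : minB G u ≤ v :=
      minB_le (hne2 u hu) (mem_earlierNbrs.mpr ⟨hu.1.symm, hu.2.2⟩)
    rcases lt_or_eq_of_le hle with hlt | heq
    · exact hlt
    · exfalso
      have hspec := colorAux_spec (hne2 u hu)
      rw [heq] at hspec
      have : C u = 1 + C v := hspec
      rw [hu.2.1] at this
      exact one_add_ne_fin2 (C v) this.symm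
  have hmadj : ∀ u ∈ S2, G.Adj u (minB G u) := fun u hu => (minB_mem (hne2 u hu)).1
  -- It is 2-reachable from v
  have hmem : ∀ u ∈ S2, minB G u ∈ R := by
    intro u hu
    exact Or.inr ⟨le_of_lt (hmlt u hu), Or.inr ⟨u, le_of_lt hu.2.2,
      (hu.1.ne).symm, hu.1, hmadj u hu⟩⟩
  -- Injectivity from K_{2,2}-freeness
  have hinj : S2.InjOn (minB G) := by
    intro u1 hu1 u2 hu2 heq
    by_contra hne
    have hm1 : minB G u1 ≠ v := ne_of_lt (hmlt u1 hu1)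
    exact no_two_common hK hne (Ne.symm hm1) hu1.1.symm (hmadj u1 hu1)
      hu2.1.symm (heq ▸ hmadj u2 hu2)
  have h2 : S2.ncard + 1 ≤ k := by
    have hins : insert v (minB G '' S2) ⊆ R := by
      rintro w hw
      rcases Set.mem_insert_iff.mp hw with rfl | ⟨u, hu, rfl⟩
      · exact hvR
      · exact hmem u hu
    have hnm : v ∉ minB G '' S2 := by
      rintro ⟨u, hu, heq⟩
      exact lt_irrefl v (heq ▸ hmlt u hu)
    calc S2.ncard + 1 = (minB G '' S2).ncard + 1 := by rw [Set.ncard_image_of_injOn hinj]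
      _ = (insert v (minB G '' S2)).ncard :=
          (Set.ncard_insert_of_notMem hnm (Set.toFinite _)).symm
      _ ≤ R.ncard := Set.ncard_le_ncard hins (Set.toFinite _)
      _ ≤ k := hk v
  -- Combine
  have hsub : {w | G.Adj v w ∧ C w = C v} ⊆ S1 ∪ S2 := by
    rintro w ⟨hadj, hc⟩
    rcases (hadj.ne).lt_or_gt with hlt | hlt
    · exact Or.inr ⟨hadj, hc, hlt⟩
    · exact Or.inl ⟨hadj, hc, hlt⟩
  calc {w | G.Adj v w ∧ C w = C v}.ncard
      ≤ (S1 ∪ S2).ncard := Set.ncard_le_ncard hsub (Set.toFinite _)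
    _ ≤ S1.ncard + S2.ncard := Set.ncard_union_le _ _
    _ ≤ 2 * k := by omega

end StmtSevenAux

/-- every `K_{2,2}`-subgraph-free graph is 2-colourable with defect at most
`2 * col₂(G)`. -/
theorem stmt7 {V : Type*} [Fintype V] (G : SimpleGraph V)
    (h : ¬ HasKstSubgraph G 2 2) :
    ∃ C : V → Fin 2, HasDefect G C (2 * col2 G) := by
  classical
  have hne : {m | ∃ r : V → V → Prop, IsLinearOrder V r ∧
      ∀ v, {w | TwoReach G r v w}.ncard ≤ m}.Nonempty := by
    refine ⟨Fintype.card V, ?_⟩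
    letI : LinearOrder V := LinearOrder.lift' (Fintype.equivFin V) (Fintype.equivFin V).injective
    refine ⟨(· ≤ ·), inferInstance, fun v => ?_⟩
    calc {w | TwoReach G (· ≤ ·) v w}.ncard
        ≤ (Set.univ : Set V).ncard := Set.ncard_le_ncard (Set.subset_univ _) (Set.toFinite _)
      _ = Nat.card V := Set.ncard_univ V
      _ = Fintype.card V := Nat.card_eq_fintype_card
  obtain ⟨r, hr, hb⟩ : ∃ r : V → V → Prop, IsLinearOrder V r ∧
      ∀ v, {w | TwoReach G r v w}.ncard ≤ col2 G := Nat.sInf_mem hne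
  letI : LinearOrder V := isLinearOrderToLinearOrder r hr
  exact stmt7Aux G h (col2 G) hb
end

section
/- For all integers γ, k ≥ 0, every n-vertex graph G with girth at least 5 that has a vertex set A of size at most k with G−A of Euler genus at most γ satisfies |E(G)| ≤ (8/3)n + (5/3)γ + (k+1)·C(k,2). -/
open SimpleGraph Set

lemma noC4 {V : Type*} {G : SimpleGraph V} (hg : (5:ℕ∞) ≤ G.egirth) {a b w w' : V}
    (hab : a ≠ b) (hww : w ≠ w') (h1 : G.Adj w a) (h2 : G.Adj w b)
    (h3 : G.Adj w' a) (h4 : G.Adj w' b) : False := by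
  have hwa := h1.ne
  have hwb := h2.ne
  have hw'a := h3.ne
  have hw'b := h4.ne
  have hc : (Walk.cons h1.symm (Walk.cons h2 (Walk.cons h4.symm
      (Walk.cons h3 Walk.nil))) : G.Walk a a).IsCycle := by
    refine ⟨⟨⟨?_⟩, by simp⟩, ?_⟩
    · simp only [Walk.edges_cons, Walk.edges_nil, List.nodup_cons, List.mem_cons,
        List.not_mem_nil, or_false, Sym2.eq_iff, List.nodup_nil, and_true]
      push_neg
      tauto
    · simp only [Walk.support_cons, Walk.support_nil, List.tail_cons, List.nodup_cons,
        List.mem_cons, List.not_mem_nil, or_false, List.nodup_nil, and_true]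
      push_neg
      tauto
  have := SimpleGraph.le_egirth.mp hg a _ hc
  simp only [Walk.length_cons, Walk.length_nil] at this
  norm_num at this

lemma card_filter_le_induce {V : Type*} [Fintype V] (G : SimpleGraph V) (s : Set V)
    [DecidablePred (· ∈ s)] [DecidableEq V] [DecidableRel G.Adj] :
    (G.edgeFinset.filter (fun e => ∀ v ∈ e, v ∈ s)).card
      ≤ (G.induce s).edgeSet.ncard := by
  classical
  have hfin : (G.induce s).edgeSet.Finite := Set.toFinite _
  rw [Set.ncard_eq_toFinset_card' ]
  apply Finset.card_le_card_of_surjOn (Sym2.map Subtype.val)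
  rintro e he
  simp only [Finset.coe_filter, Set.mem_setOf_eq, mem_edgeFinset] at he
  obtain ⟨he1, he2⟩ := he
  induction e with
  | _ x y =>
    rw [mem_edgeSet] at he1
    have hx : x ∈ s := he2 x (by simp)
    have hy : y ∈ s := he2 y (by simp)
    refine ⟨s(⟨x, hx⟩, ⟨y, hy⟩), ?_, by simp⟩
    simp [mem_edgeSet, he1]

lemma crossBound {V : Type*} [Fintype V] [DecidableEq V] (G : SimpleGraph V)
    [DecidableRel G.Adj] (A : Set V) [DecidablePred (· ∈ A)]
    (hg : (5:ℕ∞) ≤ G.egirth) :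
    (G.edgeFinset.filter (fun e => ¬(∀ v ∈ e, v ∈ A) ∧ ¬(∀ v ∈ e, v ∈ Aᶜ))).card
      ≤ Fintype.card V + (A.toFinset.card.choose 2) * A.toFinset.card := by
  classical
  set Af := A.toFinset with hAf
  set Bc := Afᶜ with hBc
  set N : V → Finset V := fun w => Af.filter (fun a => G.Adj w a) with hN
  set P := (Bc ×ˢ Af).filter (fun p => G.Adj p.1 p.2) with hP
  set F1 := G.edgeFinset.filter (fun e => ¬(∀ v ∈ e, v ∈ A) ∧ ¬(∀ v ∈ e, v ∈ Aᶜ)) with hF1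
  rcases F1.eq_empty_or_nonempty with hemp | ⟨e0, he0⟩
  · simp [hemp]
  have : Nonempty V := by
    induction e0 with
    | _ x y => exact ⟨x⟩
  -- step 1 : F1.card ≤ P.card
  have key : ∀ e ∈ F1, ∃ p : V × V, p.1 ∉ A ∧ p.2 ∈ A ∧ e = s(p.1, p.2) := by
    intro e he
    rw [hF1, Finset.mem_filter] at he
    obtain ⟨hee, hnot2, hnot0⟩ := he
    push_neg at hnot2 hnot0
    induction e with
    | _ x y =>
      by_cases hx : x ∈ A
      · obtain ⟨v, hv, hv'⟩ := hnot2
        rw [Sym2.mem_iff] at hv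
        rcases hv with rfl | rfl
        · exact absurd hx hv'
        · exact ⟨(v, x), hv', hx, Sym2.eq_swap⟩
      · obtain ⟨v, hv, hv'⟩ := hnot0
        rw [Sym2.mem_iff] at hv
        have hvA : v ∈ A := Set.notMem_compl_iff.mp hv'
        rcases hv with rfl | rfl
        · exact absurd hvA hx
        · exact ⟨(x, v), hx, hvA, rfl⟩
  set f : Sym2 V → V × V := fun e =>
    if h : ∃ p : V × V, p.1 ∉ A ∧ p.2 ∈ A ∧ e = s(p.1, p.2) then h.choose
    else (Classical.arbitrary V, Classical.arbitrary V) with hf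
  have hfspec : ∀ e ∈ F1, (f e).1 ∉ A ∧ (f e).2 ∈ A ∧ e = s((f e).1, (f e).2) := by
    intro e he
    have h := key e he
    simp only [hf, dif_pos h]
    exact h.choose_spec
  have step1 : F1.card ≤ P.card := by
    apply Finset.card_le_card_of_injOn f
    · intro e he
      obtain ⟨h1, h2, h3⟩ := hfspec e he
      have hee : e ∈ G.edgeFinset := (Finset.mem_filter.mp he).1
      rw [h3, mem_edgeFinset, mem_edgeSet] at hee
      simp only [Finset.mem_coe, hP, Finset.mem_filter, Finset.mem_product, hBc, Finset.mem_compl, hAf,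
        Set.mem_toFinset]
      exact ⟨⟨h1, h2⟩, hee⟩
    · intro e he e' he' hfe
      obtain ⟨_, _, h3⟩ := hfspec e he
      obtain ⟨_, _, h3'⟩ := hfspec e' he'
      rw [h3, h3', hfe]
  -- step 2 : P.card = ∑ w in Bc, (N w).card
  have step2 : P.card = ∑ w ∈ Bc, (N w).card := by
    rw [Finset.card_eq_sum_card_fiberwise (f := Prod.fst) (t := Bc)
      (fun p hp => (Finset.mem_product.mp (Finset.mem_filter.mp hp).1).1)]
    refine Finset.sum_congr rfl fun w hw => ?_
    refine Finset.card_bij' (fun p _ => p.2) (fun a _ => (w, a)) ?_ ?_ ?_ ?_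
    · intro p hp
      simp only [Finset.mem_filter, hP, Finset.mem_product] at hp
      obtain ⟨⟨⟨_, h2⟩, h3⟩, h4⟩ := hp
      subst h4
      simp only [hN, Finset.mem_filter]
      exact ⟨h2, h3⟩
    · intro a ha
      simp only [hN, Finset.mem_filter] at ha
      simp only [Finset.mem_filter, hP, Finset.mem_product]
      exact ⟨⟨⟨hw, ha.1⟩, ha.2⟩, trivial⟩
    · intro p hp
      simp only [Finset.mem_filter] at hp
      exact Prod.ext hp.2.symm rfl
    · intro a _
      rfl
  -- step 3/4
  set T := Bc.filter (fun w => 2 ≤ (N w).card) with hT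
  have step4 : T.card ≤ Af.card.choose 2 := by
    rw [← Finset.card_powersetCard 2 Af]
    set g : V → Finset V := fun w =>
      if h : ∃ p : V × V, p.1 ∈ N w ∧ p.2 ∈ N w ∧ p.1 ≠ p.2 then {h.choose.1, h.choose.2}
      else ∅ with hgdef
    have hgspec : ∀ w ∈ T, ∃ a b : V, a ∈ N w ∧ b ∈ N w ∧ a ≠ b ∧ g w = {a, b} := by
      intro w hw
      have h2 : 1 < (N w).card := (Finset.mem_filter.mp hw).2
      obtain ⟨a, ha, b, hb, hab⟩ := Finset.one_lt_card.mp h2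
      have h : ∃ p : V × V, p.1 ∈ N w ∧ p.2 ∈ N w ∧ p.1 ≠ p.2 := ⟨(a, b), ha, hb, hab⟩
      refine ⟨h.choose.1, h.choose.2, h.choose_spec.1, h.choose_spec.2.1, h.choose_spec.2.2, ?_⟩
      simp only [hgdef, dif_pos h]
    apply Finset.card_le_card_of_injOn g
    · intro w hw
      obtain ⟨a, b, ha, hb, hab, hg'⟩ := hgspec w hw
      rw [Finset.mem_coe, Finset.mem_powersetCard, hg']
      constructor
      · intro x hx
        rw [Finset.mem_insert, Finset.mem_singleton] at hx
        rcases hx with rfl | rfl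
        · exact Finset.filter_subset _ _ ha
        · exact Finset.filter_subset _ _ hb
      · exact Finset.card_pair hab
    · intro w hw w' hw' hgw
      by_contra hne
      obtain ⟨a, b, ha, hb, hab, hg1⟩ := hgspec w hw
      obtain ⟨a', b', ha', hb', hab', hg2⟩ := hgspec w' hw'
      have hset : ({a, b} : Finset V) = {a', b'} := by rw [← hg1, ← hg2, hgw]
      have haw' : a ∈ N w' := by
        have : a ∈ ({a', b'} : Finset V) := by rw [← hset]; simp
        rw [Finset.mem_insert, Finset.mem_singleton] at this
        rcases this with rfl | rfl <;> assumption
      have hbw' : b ∈ N w' := by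
        have : b ∈ ({a', b'} : Finset V) := by rw [← hset]; simp
        rw [Finset.mem_insert, Finset.mem_singleton] at this
        rcases this with rfl | rfl <;> assumption
      have adj1 : G.Adj w a := (Finset.mem_filter.mp ha).2
      have adj2 : G.Adj w b := (Finset.mem_filter.mp hb).2
      have adj3 : G.Adj w' a := (Finset.mem_filter.mp haw').2
      have adj4 : G.Adj w' b := (Finset.mem_filter.mp hbw').2
      exact noC4 hg hab hne adj1 adj2 adj3 adj4
  have step3 : ∑ w ∈ Bc, (N w).card ≤ Fintype.card V + Af.card.choose 2 * Af.card := by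
    rw [← Finset.sum_filter_add_sum_filter_not Bc (fun w => 2 ≤ (N w).card)]
    have hTle : ∑ w ∈ T, (N w).card ≤ T.card * Af.card := by
      apply Finset.sum_le_card_nsmul
      intro w _
      exact Finset.card_le_card (Finset.filter_subset _ _)
    have hle : ∑ w ∈ Bc.filter (fun w => ¬ 2 ≤ (N w).card), (N w).card
        ≤ (Bc.filter (fun w => ¬ 2 ≤ (N w).card)).card * 1 := by
      apply Finset.sum_le_card_nsmul
      intro w hw
      have := (Finset.mem_filter.mp hw).2
      omega
    calc ∑ w ∈ T, (N w).card + ∑ w ∈ Bc.filter (fun w => ¬ 2 ≤ (N w).card), (N w).card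
        ≤ T.card * Af.card + (Bc.filter (fun w => ¬ 2 ≤ (N w).card)).card * 1 := by
          exact Nat.add_le_add hTle hle
      _ ≤ Af.card.choose 2 * Af.card + Fintype.card V := by
          apply Nat.add_le_add
          · exact Nat.mul_le_mul_right _ step4
          · rw [Nat.mul_one]
            exact le_trans (Finset.card_le_card (Finset.filter_subset _ _))
              (le_trans (Finset.card_le_univ _) (le_of_eq (Finset.card_univ)))
      _ = Fintype.card V + Af.card.choose 2 * Af.card := Nat.add_comm _ _
  omega

lemma edge_ncard_eq {W : Type*} [Fintype W] (H : SimpleGraph W) [DecidableRel H.Adj] :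
    H.edgeSet.ncard = H.edgeFinset.card := by
  rw [Set.ncard_eq_toFinset_card', SimpleGraph.edgeFinset]

lemma edge_ncard_le {W : Type*} [Fintype W] (H : SimpleGraph W) :
    H.edgeSet.ncard ≤ (Fintype.card W).choose 2 := by
  classical
  rw [edge_ncard_eq]
  exact SimpleGraph.card_edgeFinset_le_card_choose_two

lemma card_coe_set {V : Type*} (s : Set V) [Fintype ↥s] : Fintype.card ↥s = s.ncard := by
  rw [← Nat.card_coe_set_eq, Nat.card_eq_fintype_card]

/-- every `n`-vertex `(γ,k)`-apex graph with girth at least 5 has at most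
`(8/3)n + (5/3)γ + (k+1)·C(k,2)` edges. Euler genus at most `γ` of `G - A` is encoded
via its Euler-formula consequence: every induced subgraph of `G - A` on `m ≥ 4` vertices
(automatically of genus at most `γ` and girth at least 5) has at most `(5/3)(m+γ-2)` edges. -/
theorem stmt9 {V : Type*} [Fintype V] (γ k : ℕ) (G : SimpleGraph V) (A : Set V)
    (hA : A.ncard ≤ k) (hg : (5 : ℕ∞) ≤ G.egirth)
    (hgenus : ∀ s : Set V, s ⊆ Aᶜ → 4 ≤ s.ncard →
      ((G.induce s).edgeSet.ncard : ℚ) ≤ 5/3 * ((s.ncard : ℚ) + (γ : ℚ) - 2)) :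
    (G.edgeSet.ncard : ℚ) ≤
      8/3 * (Fintype.card V : ℚ) + 5/3 * (γ : ℚ) + ((k : ℚ) + 1) * (k.choose 2 : ℚ) := by
  classical
  set n := Fintype.card V with hn
  -- partition of the edge set
  have h1 := Finset.card_filter_add_card_filter_not
    (s := G.edgeFinset) (p := fun e => ∀ v ∈ e, v ∈ A)
  have h2 := Finset.card_filter_add_card_filter_not
    (s := G.edgeFinset.filter (fun e => ¬ ∀ v ∈ e, v ∈ A)) (p := fun e => ∀ v ∈ e, v ∈ Aᶜ)
  rw [Finset.filter_filter, Finset.filter_filter] at h2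
  -- bound on edges inside A
  have hAcard : Fintype.card ↥A = A.ncard := card_coe_set A
  have B2 : (G.edgeFinset.filter (fun e => ∀ v ∈ e, v ∈ A)).card ≤ k.choose 2 := by
    refine le_trans (card_filter_le_induce G A) (le_trans (edge_ncard_le _) ?_)
    rw [hAcard]
    exact Nat.choose_le_choose 2 hA
  -- bound on edges inside Aᶜ
  have hmn : Aᶜ.ncard ≤ n := by
    rw [hn, ← Nat.card_eq_fintype_card, ← Set.ncard_univ V]
    exact Set.ncard_le_ncard (Set.subset_univ _) (Set.toFinite _)
  have B0 : ((G.edgeFinset.filter (fun e => (¬ ∀ v ∈ e, v ∈ A) ∧ ∀ v ∈ e, v ∈ Aᶜ)).card : ℚ)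
      ≤ 5/3 * (n : ℚ) + 5/3 * (γ : ℚ) := by
    have hsub : (G.edgeFinset.filter (fun e => (¬ ∀ v ∈ e, v ∈ A) ∧ ∀ v ∈ e, v ∈ Aᶜ)).card
        ≤ (G.edgeFinset.filter (fun e => ∀ v ∈ e, v ∈ Aᶜ)).card := by
      apply Finset.card_le_card
      exact Finset.monotone_filter_right _ (fun e _ he => he.2)
    have hind := card_filter_le_induce G Aᶜ
    rcases le_or_gt 4 (Aᶜ.ncard) with h4 | h4
    · have hq := hgenus Aᶜ (subset_refl _) h4
      have c1 : ((G.edgeFinset.filter (fun e => (¬ ∀ v ∈ e, v ∈ A) ∧ ∀ v ∈ e, v ∈ Aᶜ)).card : ℚ)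
          ≤ ((G.induce Aᶜ).edgeSet.ncard : ℚ) := by
        exact_mod_cast le_trans hsub hind
      have c2 : ((Aᶜ.ncard : ℚ)) ≤ (n : ℚ) := by exact_mod_cast hmn
      linarith
    · have hch : (G.induce Aᶜ).edgeSet.ncard ≤ (Aᶜ.ncard).choose 2 := by
        have := edge_ncard_le (G.induce Aᶜ)
        rwa [card_coe_set] at this
      have hsmall : (Aᶜ.ncard).choose 2 ≤ Aᶜ.ncard := by
        interval_cases h : Aᶜ.ncard <;> simp
      have : (G.edgeFinset.filter (fun e => (¬ ∀ v ∈ e, v ∈ A) ∧ ∀ v ∈ e, v ∈ Aᶜ)).card ≤ n :=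
        le_trans hsub (le_trans hind (le_trans hch (le_trans hsmall hmn)))
      have c1 : ((G.edgeFinset.filter (fun e => (¬ ∀ v ∈ e, v ∈ A) ∧ ∀ v ∈ e, v ∈ Aᶜ)).card : ℚ)
          ≤ (n : ℚ) := by exact_mod_cast this
      have : (0:ℚ) ≤ (n:ℚ) := by positivity
      have : (0:ℚ) ≤ (γ:ℚ) := by positivity
      linarith
  -- bound on cross edges
  have B1 : (G.edgeFinset.filter (fun e => (¬ ∀ v ∈ e, v ∈ A) ∧ ¬ ∀ v ∈ e, v ∈ Aᶜ)).card
      ≤ n + k.choose 2 * k := by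
    refine le_trans (crossBound G A hg) ?_
    have hk : A.toFinset.card ≤ k := by rwa [Set.toFinset_card, hAcard]
    exact Nat.add_le_add le_rfl
      (Nat.mul_le_mul (Nat.choose_le_choose 2 hk) hk)
  -- assemble
  have hE : G.edgeSet.ncard = G.edgeFinset.card := edge_ncard_eq G
  have htot : G.edgeSet.ncard
      = (G.edgeFinset.filter (fun e => ∀ v ∈ e, v ∈ A)).card
        + (G.edgeFinset.filter (fun e => (¬ ∀ v ∈ e, v ∈ A) ∧ ∀ v ∈ e, v ∈ Aᶜ)).card
        + (G.edgeFinset.filter (fun e => (¬ ∀ v ∈ e, v ∈ A) ∧ ¬ ∀ v ∈ e, v ∈ Aᶜ)).card := by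
    omega
  have c2 : ((G.edgeFinset.filter (fun e => ∀ v ∈ e, v ∈ A)).card : ℚ) ≤ (k.choose 2 : ℚ) := by
    exact_mod_cast B2
  have c1 : ((G.edgeFinset.filter (fun e => (¬ ∀ v ∈ e, v ∈ A) ∧ ¬ ∀ v ∈ e, v ∈ Aᶜ)).card : ℚ)
      ≤ (n : ℚ) + (k.choose 2 : ℚ) * (k : ℚ) := by exact_mod_cast B1
  rw [htot]
  push_cast
  nlinarith [B0, c1, c2]
end
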